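/- arXiv:1211.4817 — 5 statements merged into one kernel-verified Lean document; each statement's English description precedes it below -/
import Mathlib

section
/- Let α ∈ (1,2) and let Γ_i = E_1 + ⋯ + E_i be the partial sums of i.i.d. standard exponential random variables (the points of a unit-rate homogeneous Poisson process on [0,∞)). Then the random series ∑_{i=1}^∞ |Γ_i^{-1/α} - i^{-1/α}| converges almost surely. -/
open MeasureTheory ProbabilityTheory Filter Set Real
open scoped ENNReal NNReal

section Aux

lemma rpow_neg_sub_le_aux {p x y : ℝ} (hp : 0 < p) (hx : 0 < x) (h : x ≤ y) :
    |x ^ (-p) - y ^ (-p)| ≤ p * x ^ (-p - 1) * |x - y| := by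
  rcases eq_or_lt_of_le h with rfl | hlt
  · simp
  have hcont : ContinuousOn (fun z : ℝ => z ^ (-p)) (Icc x y) := by
    intro z hz
    exact (Real.continuousAt_rpow_const z (-p) (Or.inl (hx.trans_le hz.1).ne')).continuousWithinAt
  have hderiv : ∀ z ∈ Ioo x y, HasDerivAt (fun z : ℝ => z ^ (-p)) (-p * z ^ (-p - 1)) z := by
    intro z hz
    exact Real.hasDerivAt_rpow_const (Or.inl (hx.trans hz.1).ne')
  obtain ⟨c, hc, hceq⟩ := exists_hasDerivAt_eq_slope (fun z : ℝ => z ^ (-p))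
    (fun z => -p * z ^ (-p - 1)) hlt hcont hderiv
  have hcpos : 0 < c := hx.trans hc.1
  have hyx : (0:ℝ) < y - x := sub_pos.mpr hlt
  have heq : x ^ (-p) - y ^ (-p) = p * c ^ (-p - 1) * (y - x) := by
    have h2 : -p * c ^ (-p - 1) * (y - x) = y ^ (-p) - x ^ (-p) := by
      rw [hceq]; field_simp
    nlinarith [h2]
  have hcle : c ^ (-p - 1) ≤ x ^ (-p - 1) := by
    rw [show (-p - 1 : ℝ) = -(p + 1) by ring, Real.rpow_neg hcpos.le, Real.rpow_neg hx.le]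
    exact inv_anti₀ (Real.rpow_pos_of_pos hx _)
      (Real.rpow_le_rpow hx.le hc.1.le (by linarith))
  rw [heq, abs_sub_comm, abs_of_nonneg hyx.le,
    abs_of_nonneg (by positivity : (0:ℝ) ≤ p * c ^ (-p-1) * (y - x))]
  nlinarith [mul_nonneg hp.le (mul_nonneg (sub_nonneg.mpr hcle) hyx.le)]

-- MVT bound: |x^(-p) - y^(-p)| ≤ p * (min x y)^(-p-1) * |x - y|
lemma rpow_neg_sub_le {p x y : ℝ} (hp : 0 < p) (hx : 0 < x) (hy : 0 < y) :
    |x ^ (-p) - y ^ (-p)| ≤ p * (min x y) ^ (-p - 1) * |x - y| := by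
  rcases le_total x y with h | h
  · rw [min_eq_left h]; exact rpow_neg_sub_le_aux hp hx h
  · rw [min_eq_right h, abs_sub_comm, abs_sub_comm x y]
    exact rpow_neg_sub_le_aux hp hy h

lemma summable_rpow_shift {q : ℝ} (hq : q < -1) :
    Summable (fun n : ℕ => ((n : ℝ) + 1) ^ q) := by
  have h := Real.summable_nat_rpow.mpr hq
  have := (summable_nat_add_iff (f := fun n : ℕ => (n : ℝ) ^ q) 1).mpr h
  refine this.congr fun n => ?_
  push_cast
  ring_nf

lemma summable_of_eventually_le {f g : ℕ → ℝ} (hf : ∀ n, 0 ≤ f n)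
    (h : ∀ᶠ n in atTop, f n ≤ g n) (hg : Summable g) : Summable f := by
  obtain ⟨N, hN⟩ := eventually_atTop.mp h
  refine (summable_nat_add_iff N).mp ?_
  exact Summable.of_nonneg_of_le (fun n => hf _) (fun n => hN _ (Nat.le_add_left _ _))
    ((summable_nat_add_iff N).mpr hg)

lemma summable_exp_neg_rpow {c δ : ℝ} (hc : 0 < c) (hδ : 0 < δ) :
    Summable (fun n : ℕ => Real.exp (-(c * ((n : ℝ) + 1) ^ δ))) := by
  -- compare with (n+1)^(-2)
  have hlog : (fun x : ℝ => Real.log x) =o[atTop] fun x => x ^ δ :=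
    isLittleO_log_rpow_atTop hδ
  have hev : ∀ᶠ x : ℝ in atTop, Real.log x ≤ (c / 2) * x ^ δ := by
    filter_upwards [hlog.bound (by positivity : (0:ℝ) < c / 2), eventually_ge_atTop (1:ℝ)]
      with x hx hx1
    calc Real.log x ≤ |Real.log x| := le_abs_self _
    _ ≤ c / 2 * |x ^ δ| := hx
    _ = c / 2 * x ^ δ := by rw [abs_of_nonneg (Real.rpow_nonneg (by linarith) _)]
  have hev2 : ∀ᶠ n : ℕ in atTop, Real.exp (-(c * ((n : ℝ) + 1) ^ δ)) ≤ ((n : ℝ) + 1) ^ (-2 : ℝ) := by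
    have htend : Tendsto (fun n : ℕ => (n : ℝ) + 1) atTop atTop :=
      tendsto_atTop_add_const_right _ _ tendsto_natCast_atTop_atTop
    filter_upwards [htend.eventually hev] with n hn
    have hpos : (0:ℝ) < (n : ℝ) + 1 := by positivity
    rw [← Real.exp_log (x := ((n:ℝ)+1) ^ (-2:ℝ)) (Real.rpow_pos_of_pos hpos _),
      Real.exp_le_exp, Real.log_rpow hpos]
    nlinarith [hn]
  exact summable_of_eventually_le (fun n => (Real.exp_pos _).le) hev2
    (summable_rpow_shift (by norm_num))

variable {Ω : Type*} [MeasurableSpace Ω] (μ : Measure Ω) [IsProbabilityMeasure μ]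

lemma map_eq_expMeasure {X : Ω → ℝ} (hX : Measurable X)
    (htail : ∀ t : ℝ, 0 ≤ t → μ {ω | X ω > t} = ENNReal.ofReal (Real.exp (-t))) :
    μ.map X = expMeasure 1 := by
  have : IsProbabilityMeasure (μ.map X) := Measure.isProbabilityMeasure_map hX.aemeasurable
  refine Measure.ext_of_Iic _ _ (fun a => ?_)
  rw [Measure.map_apply hX measurableSet_Iic]
  have hIic : X ⁻¹' Iic a = {ω | X ω > a}ᶜ := by ext ω; simp [not_lt]
  have hms : MeasurableSet {ω | X ω > a} := measurableSet_lt measurable_const hX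
  rw [hIic, prob_compl_eq_one_sub hms]
  have hrhs : expMeasure 1 (Iic a) = ENNReal.ofReal (if 0 ≤ a then 1 - Real.exp (-a) else 0) := by
    rw [expMeasure, gammaMeasure, withDensity_apply _ measurableSet_Iic]
    have h := lintegral_exponentialPDF_eq_antiDeriv one_pos a
    simp only [one_mul] at h
    exact h
  rw [hrhs]
  by_cases ha : 0 ≤ a
  · rw [if_pos ha, htail a ha, ENNReal.ofReal_sub _ (Real.exp_nonneg _), ENNReal.ofReal_one]
  · rw [if_neg ha]
    have hsub : {ω | X ω > 0} ⊆ {ω | X ω > a} := fun ω hω => lt_trans (lt_of_not_ge ha) hω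
    have h1 : μ {ω | X ω > a} = 1 := by
      refine le_antisymm prob_le_one ?_
      have h0 : μ {ω | X ω > 0} = 1 := by rw [htail 0 le_rfl]; simp
      calc (1 : ℝ≥0∞) = μ {ω | X ω > 0} := h0.symm
      _ ≤ _ := measure_mono hsub
    rw [h1, tsub_self, ENNReal.ofReal_zero]

lemma exp_indicator_eq {t : ℝ} (x : ℝ) :
    Real.exp (t * x) * ((exponentialPDF 1 x)).toReal
      = (Ici (0:ℝ)).indicator (fun x => Real.exp ((t - 1) * x)) x := by
  rw [Set.indicator_apply]
  by_cases hx : 0 ≤ x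
  · rw [if_pos (show x ∈ Ici (0:ℝ) from hx), exponentialPDF_of_nonneg hx,
      ENNReal.toReal_ofReal (by positivity), one_mul, ← Real.exp_add]
    congr 1; ring
  · rw [if_neg (show x ∉ Ici (0:ℝ) from hx), exponentialPDF_eq, if_neg hx, ENNReal.ofReal_zero,
      ENNReal.toReal_zero, mul_zero]

lemma integrableOn_exp_Ici {t : ℝ} (ht : t < 1) :
    IntegrableOn (fun x => Real.exp ((t - 1) * x)) (Ici (0:ℝ)) := by
  rw [integrableOn_Ici_iff_integrableOn_Ioi]
  have := exp_neg_integrableOn_Ioi 0 (show (0:ℝ) < 1 - t by linarith)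
  refine this.congr_fun (fun x _ => by congr 1; ring) measurableSet_Ioi

lemma integrable_exp_expMeasure {t : ℝ} (ht : t < 1) :
    Integrable (fun x => Real.exp (t * x)) (expMeasure 1) := by
  have hmeaspdf : Measurable (gammaPDF 1 1) := (measurable_gammaPDFReal 1 1).ennreal_ofReal
  rw [expMeasure, gammaMeasure,
    integrable_withDensity_iff hmeaspdf (Eventually.of_forall fun x => ENNReal.ofReal_lt_top)]
  have heq : (fun x => Real.exp (t * x) * (gammaPDF 1 1 x).toReal)
      = (Ici (0:ℝ)).indicator (fun x => Real.exp ((t - 1) * x)) := by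
    funext x; exact exp_indicator_eq x
  rw [heq]
  exact (integrable_indicator_iff measurableSet_Ici).mpr (integrableOn_exp_Ici ht)

lemma integral_exp_expMeasure {t : ℝ} (ht : t < 1) :
    ∫ x, Real.exp (t * x) ∂(expMeasure 1) = (1 - t)⁻¹ := by
  have hb : (0:ℝ) < 1 - t := by linarith
  have hrfl : expMeasure 1
      = (volume : Measure ℝ).withDensity
        (fun x => ((Real.toNNReal (exponentialPDFReal 1 x) : ℝ≥0) : ℝ≥0∞)) := rfl
  rw [hrfl, integral_withDensity_eq_integral_smul ((measurable_exponentialPDFReal 1).real_toNNReal) _]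
  have hfun : (fun x => (Real.toNNReal (exponentialPDFReal 1 x)) • Real.exp (t * x))
      = (Ici (0:ℝ)).indicator (fun x => Real.exp ((t - 1) * x)) := by
    funext x
    rw [NNReal.smul_def, smul_eq_mul, Real.coe_toNNReal _ (exponentialPDFReal_nonneg one_pos x),
      mul_comm]
    rw [show exponentialPDFReal 1 x = (exponentialPDF 1 x).toReal by
      rw [exponentialPDF, ENNReal.toReal_ofReal (exponentialPDFReal_nonneg one_pos x)]]
    exact exp_indicator_eq x
  rw [hfun, integral_indicator measurableSet_Ici, integral_Ici_eq_integral_Ioi]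
  have hcomp := integral_comp_mul_left_Ioi (fun y => Real.exp (-y)) 0 hb
  simp only [mul_zero, integral_exp_neg_Ioi, neg_zero, Real.exp_zero, smul_eq_mul, mul_one] at hcomp
  have hfun2 : (fun x => Real.exp ((t - 1) * x)) = fun x => Real.exp (-((1 - t) * x)) := by
    funext x; congr 1; ring
  rw [hfun2]
  exact hcomp


variable {Ω : Type*} [MeasurableSpace Ω] {μ : Measure Ω} [IsProbabilityMeasure μ]

lemma integrable_exp_mul_of_tail {X : Ω → ℝ} (hX : Measurable X)
    (hmap : μ.map X = expMeasure 1) {t : ℝ} (ht : t < 1)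
    (hie : Integrable (fun x => Real.exp (t * x)) (expMeasure 1)) :
    Integrable (fun ω => Real.exp (t * X ω)) μ := by
  rw [← hmap] at hie
  exact (integrable_map_measure
    (Real.continuous_exp.comp (continuous_const.mul continuous_id)).aestronglyMeasurable
    hX.aemeasurable).mp hie

lemma mgf_of_tail {X : Ω → ℝ} (hX : Measurable X)
    (hmap : μ.map X = expMeasure 1) {t : ℝ} (ht : t < 1) :
    mgf X μ t = (1 - t)⁻¹ := by
  have hg : AEStronglyMeasurable (fun x : ℝ => Real.exp (t * x)) (μ.map X) :=
    (Real.measurable_exp.comp (measurable_id.const_mul t)).aestronglyMeasurable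
  have : mgf X μ t = ∫ x, Real.exp (t * x) ∂(μ.map X) := (integral_map hX.aemeasurable hg).symm
  rw [this, hmap]
  exact integral_exp_expMeasure ht

lemma inv_one_sub_le_exp {t : ℝ} (h0 : 0 ≤ t) (h1 : t ≤ 1/2) :
    (1 - t)⁻¹ ≤ Real.exp (t + 2*t^2) := by
  have hb : (0:ℝ) < 1 - t := by linarith
  rw [inv_le_iff_one_le_mul₀ hb]
  nlinarith [Real.add_one_le_exp (t + 2*t^2), Real.exp_pos (t + 2*t^2)]

lemma inv_one_add_le_exp {s : ℝ} (h0 : 0 ≤ s) :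
    (1 + s)⁻¹ ≤ Real.exp (-s + s^2) := by
  have hb : (0:ℝ) < 1 + s := by linarith
  rw [inv_le_iff_one_le_mul₀ hb]
  nlinarith [Real.add_one_le_exp (-s + s^2), Real.exp_pos (-s + s^2)]
variable {Ω : Type*} [MeasurableSpace Ω] {μ : Measure Ω} [IsProbabilityMeasure μ]

lemma tail_bound (E : ℕ → Ω → ℝ) (hmeas : ∀ i, Measurable (E i))
    (hindep : iIndepFun E μ)
    (hmapAll : ∀ i, μ.map (E i) = expMeasure 1) {b : ℝ} (hb1 : 1/2 < b) (hb2 : b < 1)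
    (m : ℕ) (hm : 1 ≤ m) :
    μ {ω | (m:ℝ)^b ≤ |(∑ i ∈ Finset.range m, E i) ω - m|}
      ≤ ENNReal.ofReal (2 * Real.exp (-((m:ℝ)^(2*b-1)/8))) := by
  set x : ℝ := (m:ℝ) with hxdef
  have hx1 : (1:ℝ) ≤ x := Nat.one_le_cast.mpr hm
  have hx0 : (0:ℝ) < x := by linarith
  set t : ℝ := x^(b-1)/4 with htdef
  have htpos : 0 ≤ t := by positivity
  have ht4 : t ≤ 1/4 := by
    have : x^(b-1) ≤ 1 := Real.rpow_le_one_of_one_le_of_nonpos hx1 (by linarith)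
    simp only [htdef]; linarith
  have ht1 : t < 1 := by linarith
  have hs1 : -t < 1 := by linarith
  -- integrability
  have hSint : ∀ u : ℝ, u < 1 → Integrable (fun ω => Real.exp (u * (∑ i ∈ Finset.range m, E i) ω)) μ :=
    fun u hu => hindep.integrable_exp_mul_sum hmeas
      (fun i _ => integrable_exp_mul_of_tail (hmeas i) (hmapAll i) hu (integrable_exp_expMeasure hu))
  -- mgf of the sum
  have hmgf : ∀ u : ℝ, u < 1 → mgf (∑ i ∈ Finset.range m, E i) μ u = ((1 - u)⁻¹)^m := by
    intro u hu
    rw [hindep.mgf_sum hmeas]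
    rw [Finset.prod_congr rfl (fun i _ => mgf_of_tail (hmeas i) (hmapAll i) hu),
      Finset.prod_const, Finset.card_range]
  -- rpow arithmetic
  have h2b : x^(b-1) * x^b = x^(2*b-1) := by
    rw [← Real.rpow_add hx0]; ring_nf
  have h2b' : x * (x^(b-1) * x^(b-1)) = x^(2*b-1) := by
    rw [show (2*b-1 : ℝ) = 1 + ((b-1)+(b-1)) by ring, Real.rpow_add hx0, Real.rpow_add hx0,
      Real.rpow_one]
  -- upper tail
  have hup : (μ {ω | x + x^b ≤ (∑ i ∈ Finset.range m, E i) ω}).toReal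
      ≤ Real.exp (-(x^(2*b-1)/8)) := by
    have hch := measure_ge_le_exp_mul_mgf (μ := μ) (X := ∑ i ∈ Finset.range m, E i)
      (x + x^b) htpos (hSint t ht1)
    rw [hmgf t ht1] at hch
    refine hch.trans ?_
    have hpow : ((1 - t)⁻¹)^m ≤ (Real.exp (t + 2*t^2))^m :=
      pow_le_pow_left₀ (inv_nonneg.mpr (by linarith)) (inv_one_sub_le_exp htpos (by linarith)) m
    calc Real.exp (-t * (x + x^b)) * ((1 - t)⁻¹)^m
        ≤ Real.exp (-t * (x + x^b)) * (Real.exp (t + 2*t^2))^m := by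
          exact mul_le_mul_of_nonneg_left hpow (Real.exp_pos _).le
      _ = Real.exp (-t * (x + x^b) + x * (t + 2*t^2)) := by
          rw [← Real.exp_nat_mul, ← Real.exp_add, hxdef]
      _ ≤ Real.exp (-(x^(2*b-1)/8)) := by
          rw [Real.exp_le_exp]
          have e1 : t * x^b = x^(2*b-1)/4 := by
            rw [htdef, div_mul_eq_mul_div, h2b]
          have e2 : x * t^2 = x^(2*b-1)/16 := by
            have ht2 : t^2 = x^(b-1) * x^(b-1) / 16 := by rw [htdef]; ring
            rw [ht2, show x * (x^(b-1)*x^(b-1)/16) = x * (x^(b-1)*x^(b-1))/16 by ring, h2b']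
          nlinarith
  -- lower tail
  have hlo : (μ {ω | (∑ i ∈ Finset.range m, E i) ω ≤ x - x^b}).toReal
      ≤ Real.exp (-(x^(2*b-1)/8)) := by
    have hch := measure_le_le_exp_mul_mgf (μ := μ) (X := ∑ i ∈ Finset.range m, E i)
      (x - x^b) (neg_nonpos.mpr htpos) (hSint (-t) hs1)
    rw [hmgf (-t) hs1] at hch
    have hone : (1 - -t : ℝ) = 1 + t := by ring
    rw [hone] at hch
    refine hch.trans ?_
    have hpow : ((1 + t)⁻¹)^m ≤ (Real.exp (-t + t^2))^m :=
      pow_le_pow_left₀ (inv_nonneg.mpr (by linarith)) (inv_one_add_le_exp htpos) m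
    calc Real.exp (- -t * (x - x^b)) * ((1 + t)⁻¹)^m
        ≤ Real.exp (t * (x - x^b)) * (Real.exp (-t + t^2))^m := by
          rw [neg_neg]
          exact mul_le_mul_of_nonneg_left hpow (Real.exp_pos _).le
      _ = Real.exp (t * (x - x^b) + x * (-t + t^2)) := by
          rw [← Real.exp_nat_mul, ← Real.exp_add, hxdef]
      _ ≤ Real.exp (-(x^(2*b-1)/8)) := by
          rw [Real.exp_le_exp]
          have e1 : t * x^b = x^(2*b-1)/4 := by
            rw [htdef, div_mul_eq_mul_div, h2b]
          have e2 : x * t^2 = x^(2*b-1)/16 := by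
            have ht2 : t^2 = x^(b-1) * x^(b-1) / 16 := by rw [htdef]; ring
            rw [ht2, show x * (x^(b-1)*x^(b-1)/16) = x * (x^(b-1)*x^(b-1))/16 by ring, h2b']
          nlinarith
  -- combine
  have hsub : {ω | x^b ≤ |(∑ i ∈ Finset.range m, E i) ω - x|}
      ⊆ {ω | x + x^b ≤ (∑ i ∈ Finset.range m, E i) ω}
        ∪ {ω | (∑ i ∈ Finset.range m, E i) ω ≤ x - x^b} := by
    intro ω hω
    simp only [mem_setOf_eq, mem_union] at hω ⊢
    rcases le_abs.mp hω with h | h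
    · left; linarith
    · right; linarith
  have hB := (ENNReal.le_ofReal_iff_toReal_le (measure_ne_top μ _) (Real.exp_pos _).le).mpr hup
  have hC := (ENNReal.le_ofReal_iff_toReal_le (measure_ne_top μ _) (Real.exp_pos _).le).mpr hlo
  calc μ {ω | x^b ≤ |(∑ i ∈ Finset.range m, E i) ω - x|}
      ≤ μ ({ω | x + x^b ≤ (∑ i ∈ Finset.range m, E i) ω}
        ∪ {ω | (∑ i ∈ Finset.range m, E i) ω ≤ x - x^b}) := measure_mono hsub
    _ ≤ μ {ω | x + x^b ≤ (∑ i ∈ Finset.range m, E i) ω}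
        + μ {ω | (∑ i ∈ Finset.range m, E i) ω ≤ x - x^b} := measure_union_le _ _
    _ ≤ ENNReal.ofReal (Real.exp (-(x^(2*b-1)/8))) + ENNReal.ofReal (Real.exp (-(x^(2*b-1)/8))) :=
        add_le_add hB hC
    _ = ENNReal.ofReal (2 * Real.exp (-(x^(2*b-1)/8))) := by
        rw [← ENNReal.ofReal_add (Real.exp_pos _).le (Real.exp_pos _).le]
        congr 1; ring

lemma rpow_neg_anti {x y q : ℝ} (hx : 0 < x) (hxy : x ≤ y) (hq : 0 ≤ q) :
    y ^ (-q) ≤ x ^ (-q) := by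
  rw [Real.rpow_neg (le_trans hx.le hxy), Real.rpow_neg hx.le]
  exact inv_anti₀ (Real.rpow_pos_of_pos hx _) (Real.rpow_le_rpow hx.le hxy hq)

end Aux

/-- For `α ∈ (1,2)` and `Γ_i = E_1 + ⋯ + E_i` the points of a unit-rate Poisson process
(partial sums of i.i.d. standard exponentials), the series
`∑ |Γ_i ^ (-1/α) - i ^ (-1/α)|` converges almost surely. -/
theorem stmt1 {Ω : Type*} [MeasurableSpace Ω] (μ : Measure Ω) [IsProbabilityMeasure μ]
    (α : ℝ) (hα1 : 1 < α) (hα2 : α < 2)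
    (E : ℕ → Ω → ℝ) (hmeas : ∀ i, Measurable (E i))
    (hindep : iIndepFun E μ)
    (hexp : ∀ i, ∀ t : ℝ, 0 ≤ t → μ {ω | E i ω > t} = ENNReal.ofReal (Real.exp (-t))) :
    ∀ᵐ ω ∂μ,
      Summable (fun i : ℕ =>
        |(∑ k ∈ Finset.range (i + 1), E k ω) ^ (-(1 / α)) - ((i : ℝ) + 1) ^ (-(1 / α))|) := by
  have hα0 : (0:ℝ) < α := by linarith
  set p : ℝ := 1 / α with hpdef
  have hp1 : 1/2 < p := by
    rw [hpdef]
    rw [div_lt_div_iff₀ (by norm_num) hα0]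
    linarith
  have hp2 : p < 1 := by
    rw [hpdef]
    rw [div_lt_one hα0]
    linarith
  have hp0 : 0 < p := by linarith
  set b : ℝ := 1/4 + p/2 with hbdef
  have hb1 : 1/2 < b := by rw [hbdef]; linarith
  have hb2 : b < 1 := by rw [hbdef]; linarith
  have hbp : b < p := by rw [hbdef]; linarith
  have hδ : 0 < 2*b - 1 := by rw [hbdef]; linarith
  have hmapAll : ∀ i, μ.map (E i) = expMeasure 1 := fun i => map_eq_expMeasure μ (hmeas i) (hexp i)
  -- Borel–Cantelli
  have hsummable : Summable (fun n : ℕ => 2 * Real.exp (-(((n+1:ℕ):ℝ)^(2*b-1)/8))) := by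
    have h := (summable_exp_neg_rpow (c := 1/8) (δ := 2*b-1) (by norm_num) hδ).mul_left 2
    refine h.congr fun n => ?_
    congr 1
    push_cast
    ring_nf
  have hBC : ∀ᵐ ω ∂μ, ∀ᶠ n in atTop,
      ¬ (((n+1:ℕ):ℝ)^b ≤ |(∑ i ∈ Finset.range (n+1), E i) ω - ((n+1:ℕ):ℝ)|) := by
    refine ae_eventually_notMem (s := fun n =>
      {ω | ((n+1:ℕ):ℝ)^b ≤ |(∑ i ∈ Finset.range (n+1), E i) ω - ((n+1:ℕ):ℝ)|}) ?_
    have hle : ∀ n : ℕ, μ {ω | ((n+1:ℕ):ℝ)^b ≤ |(∑ i ∈ Finset.range (n+1), E i) ω - ((n+1:ℕ):ℝ)|}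
        ≤ ENNReal.ofReal (2 * Real.exp (-(((n+1:ℕ):ℝ)^(2*b-1)/8))) := fun n =>
      tail_bound E hmeas hindep hmapAll hb1 hb2 (n+1) (Nat.le_add_left 1 n)
    refine ne_of_lt (lt_of_le_of_lt (ENNReal.tsum_le_tsum hle) ?_)
    rw [← ENNReal.ofReal_tsum_of_nonneg (fun n => by positivity) hsummable]
    exact ENNReal.ofReal_lt_top
  -- a.s. positivity
  have hpos : ∀ᵐ ω ∂μ, ∀ k, 0 < E k ω := by
    rw [ae_all_iff]
    intro k
    have hms : MeasurableSet {ω | E k ω > 0} := measurableSet_lt measurable_const (hmeas k)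
    have h1 : μ {ω | E k ω > 0} = 1 := by rw [hexp k 0 le_rfl]; simp
    rw [ae_iff]
    have hset : {ω | ¬ 0 < E k ω} = {ω | E k ω > 0}ᶜ := by ext ω; simp
    rw [hset, prob_compl_eq_zero_iff hms]
    exact h1
  -- deterministic conclusion
  filter_upwards [hBC, hpos] with ω h2 h1
  have hgpos : ∀ n : ℕ, 0 < ∑ k ∈ Finset.range (n+1), E k ω := fun n =>
    Finset.sum_pos (fun k _ => h1 k) Finset.nonempty_range_add_one
  have htend : Tendsto (fun n : ℕ => (n : ℝ) + 1) atTop atTop :=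
    tendsto_atTop_add_const_right _ _ tendsto_natCast_atTop_atTop
  have hev2 : ∀ᶠ n : ℕ in atTop, 2 ≤ ((n:ℝ) + 1) ^ (1 - b) :=
    htend.eventually ((tendsto_rpow_atTop (by linarith)).eventually_ge_atTop 2)
  refine summable_of_eventually_le (fun n => abs_nonneg _) ?_
    ((summable_rpow_shift (q := b - p - 1) (by linarith)).mul_left (p * 2^(p+1)))
  filter_upwards [h2, hev2] with n hn hab
  set a : ℝ := (n:ℝ) + 1 with hadef
  set g : ℝ := ∑ k ∈ Finset.range (n+1), E k ω with hgdef
  have hapos : 0 < a := by positivity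
  have hcast : ((n+1:ℕ):ℝ) = a := by push_cast; ring
  have hsumapp : (∑ i ∈ Finset.range (n+1), E i) ω = g := by
    rw [hgdef]; simp [Finset.sum_apply]
  rw [hcast, hsumapp] at hn
  push_neg at hn
  have hS : |g - a| ≤ a^b := hn.le
  have hab2 : a^b ≤ a / 2 := by
    have h3 : a^b * 2 ≤ a^b * a^(1-b) :=
      mul_le_mul_of_nonneg_left hab (Real.rpow_nonneg hapos.le _)
    rw [← Real.rpow_add hapos] at h3
    have : b + (1 - b) = 1 := by ring
    rw [this, Real.rpow_one] at h3
    linarith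
  have hmin : a / 2 ≤ min g a := by
    refine le_min ?_ (by linarith)
    have := abs_le.mp hS
    linarith
  have hgpos' : 0 < g := hgpos n
  have key := rpow_neg_sub_le (p := p) hp0 hgpos' hapos
  have hminbound : (min g a) ^ (-p - 1) ≤ (a/2) ^ (-p - 1) := by
    have := rpow_neg_anti (x := a/2) (y := min g a) (q := p + 1) (by positivity) hmin
      (by linarith)
    rwa [show -(p+1) = -p - 1 by ring] at this
  have hchain : |g ^ (-p) - a ^ (-p)| ≤ p * (a/2) ^ (-p-1) * (a^b) := by
    refine key.trans ?_
    have h4 : p * (min g a) ^ (-p-1) * |g - a| ≤ p * (a/2) ^ (-p-1) * |g - a| :=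
      mul_le_mul_of_nonneg_right (mul_le_mul_of_nonneg_left hminbound hp0.le) (abs_nonneg _)
    refine h4.trans ?_
    exact mul_le_mul_of_nonneg_left hS (by positivity)
  have heq : p * (a/2) ^ (-p-1) * (a^b) = p * 2^(p+1) * a^(b - p - 1) := by
    have e2 : (2:ℝ)^(-p-1) = ((2:ℝ)^(p+1))⁻¹ := by
      rw [show (-p-1:ℝ) = -(p+1) by ring, Real.rpow_neg (by norm_num : (0:ℝ) ≤ 2)]
    have ea : a^(-p-1) * a^b = a^(b-p-1) := by
      rw [← Real.rpow_add hapos]; ring_nf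
    rw [Real.div_rpow hapos.le (by norm_num : (0:ℝ) ≤ 2), e2, div_inv_eq_mul, ← ea]
    ring
  rw [heq] at hchain
  have hgoal : |g ^ (-(1/α)) - a ^ (-(1/α))| = |g ^ (-p) - a ^ (-p)| := by rw [hpdef]
  calc |g ^ (-(1/α)) - a ^ (-(1/α))| = |g ^ (-p) - a ^ (-p)| := hgoal
    _ ≤ p * 2^(p+1) * a^(b - p - 1) := hchain
end

section
/- Let I be a compact interval, m > 0, and (X_n) a sequence of random elements of D(I) with sup_n ‖X_n‖_∞ ≤ m almost surely, converging weakly in (D(I), J_1 topology) to a random element X with ‖X‖_∞ ≤ m that has no fixed jumps, i.e. P(X is discontinuous at t) = 0 for every t ∈ I. Then the functions E[X_n] : t ↦ E[X_n(t)] and E[X] : t ↦ E[X(t)] are càdlàg, E[X] is continuous on I, and E[X_n] converges uniformly on I to E[X]. -/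
open MeasureTheory ProbabilityTheory Filter Set

/-- `x : ℝ → ℝ` is càdlàg on the compact interval `[a,b]`: right-continuous on `[a,b)` and
with left limits on `(a,b]`. -/
def CadlagOn (a b : ℝ) (x : ℝ → ℝ) : Prop :=
  (∀ t ∈ Set.Ico a b, Filter.Tendsto x (nhdsWithin t (Set.Ioi t)) (nhds (x t))) ∧
  (∀ t ∈ Set.Ioc a b, ∃ L : ℝ, Filter.Tendsto x (nhdsWithin t (Set.Iio t)) (nhds L))

/-- A time change of `[a,b]`: a continuous, strictly increasing map of `[a,b]` onto itself. -/
def TimeChange (a b : ℝ) (l : ℝ → ℝ) : Prop :=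
  ContinuousOn l (Set.Icc a b) ∧ StrictMonoOn l (Set.Icc a b) ∧
    l a = a ∧ l b = b ∧ Set.MapsTo l (Set.Icc a b) (Set.Icc a b)

/-- Skorokhod's `J_1` distance on `D([a,b])`. -/
noncomputable def J1dist (a b : ℝ) (x y : ℝ → ℝ) : ℝ :=
  sInf { r : ℝ | 0 ≤ r ∧ ∃ l : ℝ → ℝ, TimeChange a b l ∧
    ∀ t ∈ Set.Icc a b, |l t - t| ≤ r ∧ |x t - y (l t)| ≤ r }

/-- Continuity of a functional `F : D([a,b]) → ℝ` at `x` with respect to the `J_1` distance. -/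
def J1ContinuousAt (a b : ℝ) (F : (ℝ → ℝ) → ℝ) (x : ℝ → ℝ) : Prop :=
  ∀ ε : ℝ, 0 < ε → ∃ δ : ℝ, 0 < δ ∧ ∀ y : ℝ → ℝ, CadlagOn a b y →
    J1dist a b x y < δ → |F y - F x| < ε

/-- Weak convergence of `D([a,b])`-valued random elements in the `J_1` topology: convergence
of expectations of bounded `J_1`-continuous functionals. -/
def WeakConvJ1 {Ω : Type*} [MeasurableSpace Ω] (μ : Measure Ω) (a b : ℝ)
    (X : ℕ → Ω → ℝ → ℝ) (X₀ : Ω → ℝ → ℝ) : Prop :=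
  ∀ F : (ℝ → ℝ) → ℝ, (∃ C : ℝ, ∀ x, |F x| ≤ C) →
    (∀ x, CadlagOn a b x → J1ContinuousAt a b F x) →
    Tendsto (fun n => ∫ ω, F (X n ω) ∂μ) atTop (nhds (∫ ω, F (X₀ ω) ∂μ))

/-- The set of discontinuity points (within `[a,b]`) of a function `x`. -/
def DiscOn (a b : ℝ) (x : ℝ → ℝ) : Set ℝ :=
  {t | t ∈ Set.Icc a b ∧ ¬ ContinuousWithinAt x (Set.Icc a b) t}

namespace St5

/-! ### The clamp function -/

def cl (m v : ℝ) : ℝ := max (-m) (min v m)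

lemma neg_le_cl (m v : ℝ) : -m ≤ cl m v := le_max_left _ _
lemma cl_le {m : ℝ} (hm : 0 ≤ m) (v : ℝ) : cl m v ≤ m :=
  max_le (by linarith) (min_le_right _ _)
lemma abs_cl_le {m : ℝ} (hm : 0 ≤ m) (v : ℝ) : |cl m v| ≤ m :=
  abs_le.2 ⟨neg_le_cl m v, cl_le hm v⟩
lemma cl_eq {m v : ℝ} (h : |v| ≤ m) : cl m v = v := by
  rw [abs_le] at h; unfold cl
  rw [min_eq_left h.2, max_eq_right h.1]
lemma cl_lip (m u v : ℝ) : |cl m u - cl m v| ≤ |u - v| := by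
  unfold cl
  calc |max (-m) (min u m) - max (-m) (min v m)|
      ≤ max |(-m) - (-m)| |min u m - min v m| := abs_max_sub_max_le_max _ _ _ _
    _ ≤ max |(-m) - (-m)| (max |u - v| |m - m|) :=
        max_le_max le_rfl (abs_min_sub_min_le_max _ _ _ _)
    _ ≤ |u - v| := by simp
lemma cl_neg {m : ℝ} (hm : 0 ≤ m) (v : ℝ) : cl m (-v) = -cl m v := by
  unfold cl
  rcases le_total v m with h1 | h1 <;> rcases le_total (-m) v with h2 | h2 <;>
    simp [min_eq_left, min_eq_right, max_eq_left, max_eq_right, *] <;>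
    first
    | (rw [min_eq_left (by linarith), max_eq_right (by linarith)])
    | (rw [min_eq_right (by linarith), max_eq_left (by linarith)]; linarith)
    | (rw [min_eq_left (by linarith), max_eq_left (by linarith)]; linarith)
    | (rw [min_eq_right (by linarith), max_eq_right (by linarith)]; linarith)
    | linarith
lemma continuous_cl (m : ℝ) : Continuous (cl m) :=
  continuous_const.max (continuous_id.min continuous_const)

/-! ### The functional `U` -/

noncomputable def U (a b m k t : ℝ) (x : ℝ → ℝ) : ℝ :=
  sSup ((fun s => cl m (x s) - k * |s - t|) '' Set.Icc a b)

variable {a b m k t : ℝ} {x y : ℝ → ℝ}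

lemma U_bddAbove (hm : 0 ≤ m) (hk : 0 ≤ k) :
    BddAbove ((fun s => cl m (x s) - k * |s - t|) '' Set.Icc a b) := by
  refine ⟨m, ?_⟩; rintro _ ⟨s, hs, rfl⟩
  have h1 : 0 ≤ k * |s - t| := mul_nonneg hk (abs_nonneg _)
  have := cl_le hm (x s); dsimp; linarith

lemma le_U (hm : 0 ≤ m) (hk : 0 ≤ k) (hab : a ≤ b) {s : ℝ} (hs : s ∈ Set.Icc a b) :
    cl m (x s) - k * |s - t| ≤ U a b m k t x :=
  le_csSup (U_bddAbove hm hk) ⟨s, hs, rfl⟩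

lemma U_le (hm : 0 ≤ m) (hk : 0 ≤ k) (hab : a ≤ b) : U a b m k t x ≤ m := by
  refine csSup_le (((nonempty_Icc).2 hab).image _) ?_
  rintro _ ⟨s, hs, rfl⟩
  have h1 : 0 ≤ k * |s - t| := mul_nonneg hk (abs_nonneg _)
  have := cl_le hm (x s); dsimp; linarith

lemma abs_U_le (hm : 0 ≤ m) (hk : 0 ≤ k) (hab : a ≤ b) :
    |U a b m k t x| ≤ m + k * |a - t| := by
  rw [abs_le]; constructor
  · have h := le_U (x := x) (t := t) hm hk hab (left_mem_Icc.2 hab)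
    have := neg_le_cl m (x a); linarith
  · have h1 : 0 ≤ k * |a - t| := mul_nonneg hk (abs_nonneg _)
    have := U_le (x := x) (t := t) hm hk hab; linarith

lemma csSup_image_le_add {S : Set ℝ} (hS : S.Nonempty) {f g : ℝ → ℝ} {c : ℝ}
    (hg : BddAbove (g '' S)) (h : ∀ s ∈ S, f s ≤ g s + c) :
    sSup (f '' S) ≤ sSup (g '' S) + c := by
  refine csSup_le (hS.image f) ?_
  rintro _ ⟨s, hs, rfl⟩
  exact (h s hs).trans (add_le_add (le_csSup hg ⟨s, hs, rfl⟩) le_rfl)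

lemma U_lip_t (hm : 0 ≤ m) (hk : 0 ≤ k) (hab : a ≤ b) (t t' : ℝ) :
    |U a b m k t x - U a b m k t' x| ≤ k * |t - t'| := by
  have key : ∀ u u' : ℝ, U a b m k u x ≤ U a b m k u' x + k * |u - u'| := by
    intro u u'
    refine csSup_image_le_add ((nonempty_Icc).2 hab) (U_bddAbove hm hk) ?_
    intro s hs
    have h1 : |s - u| ≥ |s - u'| - |u - u'| := by
      have := abs_sub_abs_le_abs_sub (s - u') (u - u')
      rw [show s - u' - (u - u') = s - u + (u' - u) + (u - u') by ring] at this
      have h2 : s - u + (u' - u) + (u - u') = s - u := by ring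
      rw [h2] at this; linarith
    nlinarith [mul_le_mul_of_nonneg_left (show |s - u'| - |u - u'| ≤ |s - u| by linarith) hk]
  have h1 := key t t'
  have h2 := key t' t
  rw [abs_sub_comm t' t] at h2
  rw [abs_le]; constructor <;> linarith

lemma U_anti_k (hm : 0 ≤ m) (hab : a ≤ b) {k k' : ℝ} (hk : 0 ≤ k) (hkk : k ≤ k') :
    U a b m k' t x ≤ U a b m k t x := by
  have := csSup_image_le_add (f := fun s => cl m (x s) - k' * |s - t|)
    (g := fun s => cl m (x s) - k * |s - t|) (c := 0) ((nonempty_Icc).2 hab)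
    (U_bddAbove hm hk) ?_
  · simpa [U] using this
  · intro s hs
    nlinarith [abs_nonneg (s - t), mul_le_mul_of_nonneg_right hkk (abs_nonneg (s - t))]

/-! ### Boundedness of càdlàg functions, time changes, J1 witnesses -/

lemma cadlag_bdd (hab : a ≤ b) (hy : CadlagOn a b y) :
    ∃ M : ℝ, 0 ≤ M ∧ ∀ t ∈ Set.Icc a b, |y t| ≤ M := by
  have key : ∀ t ∈ Set.Icc a b, ∃ r > 0, ∃ Mt : ℝ,
      ∀ s ∈ Metric.ball t r ∩ Set.Icc a b, |y s| ≤ Mt := by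
    intro t ht
    have hr : ∃ δ > 0, ∃ C, ∀ s, t < s → |s - t| < δ → s ≤ b → |y s| ≤ C := by
      by_cases htb : t < b
      · have h1 := hy.1 t ⟨ht.1, htb⟩
        rw [Metric.tendsto_nhdsWithin_nhds] at h1
        obtain ⟨δ, hδ, h2⟩ := h1 (ε := 1) one_pos
        refine ⟨δ, hδ, |y t| + 1, fun s hs1 hs2 _ => ?_⟩
        have := h2 (Set.mem_Ioi.2 hs1) (by rwa [Real.dist_eq])
        rw [Real.dist_eq] at this
        have := abs_sub_abs_le_abs_sub (y s) (y t); linarith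
      · exact ⟨1, one_pos, 0, fun s hs1 _ hs3 => absurd (hs1.trans_le hs3) htb⟩
    have hl : ∃ δ > 0, ∃ C, ∀ s, s < t → |s - t| < δ → a ≤ s → |y s| ≤ C := by
      by_cases hat : a < t
      · obtain ⟨L, h1⟩ := hy.2 t ⟨hat, ht.2⟩
        rw [Metric.tendsto_nhdsWithin_nhds] at h1
        obtain ⟨δ, hδ, h2⟩ := h1 (ε := 1) one_pos
        refine ⟨δ, hδ, |L| + 1, fun s hs1 hs2 _ => ?_⟩
        have := h2 (Set.mem_Iio.2 hs1) (by rwa [Real.dist_eq])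
        rw [Real.dist_eq] at this
        have := abs_sub_abs_le_abs_sub (y s) L; linarith
      · exact ⟨1, one_pos, 0, fun s hs1 _ hs3 => absurd (hs1.trans_le (not_lt.1 hat)) (not_lt.2 hs3)⟩
    obtain ⟨δ₁, hδ₁, C₁, h₁⟩ := hr
    obtain ⟨δ₂, hδ₂, C₂, h₂⟩ := hl
    refine ⟨min δ₁ δ₂, lt_min hδ₁ hδ₂, max C₁ (max C₂ |y t|), fun s hs => ?_⟩
    obtain ⟨hball, hsI⟩ := hs
    rw [Metric.mem_ball, Real.dist_eq] at hball
    rcases lt_trichotomy t s with h | h | h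
    · exact le_max_of_le_left (h₁ s h (lt_of_lt_of_le hball (min_le_left _ _)) hsI.2)
    · rw [← h]; exact le_max_of_le_right (le_max_right _ _)
    · exact le_max_of_le_right (le_max_of_le_left
        (h₂ s h (lt_of_lt_of_le hball (min_le_right _ _)) hsI.1))
  choose! r hrpos Mt hMt using key
  obtain ⟨F, hF⟩ := IsCompact.elim_finite_subcover (isCompact_Icc (a := a) (b := b))
    (fun t : Set.Icc a b => Metric.ball t.1 (r t.1))
    (fun t => Metric.isOpen_ball)
    (fun s hs => Set.mem_iUnion.2 ⟨⟨s, hs⟩, Metric.mem_ball_self (hrpos s hs)⟩)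
  have hFne : F.Nonempty := by
    by_contra hFe
    rw [Finset.not_nonempty_iff_eq_empty] at hFe
    have := hF (Set.left_mem_Icc.2 hab)
    simp [hFe] at this
  refine ⟨max 0 (F.sup' hFne fun t => Mt t.1), le_max_left _ _, fun s hs => ?_⟩
  have := hF hs
  rw [Set.mem_iUnion₂] at this
  obtain ⟨i, hiF, hi⟩ := this
  refine le_max_of_le_right (Finset.le_sup'_of_le _ hiF ?_)
  exact hMt i.1 i.2 s ⟨hi, hs⟩

lemma timechange_id : TimeChange a b id :=
  ⟨continuousOn_id, fun u _ v _ h => h, rfl, rfl, Set.mapsTo_id _⟩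

lemma timechange_surj {l : ℝ → ℝ} (hab : a ≤ b) (hl : TimeChange a b l) :
    Set.Icc a b ⊆ l '' Set.Icc a b := by
  have h := intermediate_value_Icc hab hl.1
  rwa [hl.2.2.1, hl.2.2.2.1] at h

lemma j1_witness (hab : a ≤ b) (hx : CadlagOn a b x) (hy : CadlagOn a b y) {δ : ℝ}
    (h : J1dist a b x y < δ) :
    ∃ r, 0 ≤ r ∧ r < δ ∧ ∃ l : ℝ → ℝ, TimeChange a b l ∧
      ∀ t ∈ Set.Icc a b, |l t - t| ≤ r ∧ |x t - y (l t)| ≤ r := by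
  obtain ⟨Mx, hMx0, hMx⟩ := cadlag_bdd hab hx
  obtain ⟨My, hMy0, hMy⟩ := cadlag_bdd hab hy
  have hne : { r : ℝ | 0 ≤ r ∧ ∃ l : ℝ → ℝ, TimeChange a b l ∧
      ∀ t ∈ Set.Icc a b, |l t - t| ≤ r ∧ |x t - y (l t)| ≤ r }.Nonempty := by
    refine ⟨Mx + My, by linarith, id, timechange_id, fun t ht => ⟨by simp; linarith, ?_⟩⟩
    simp only [id_eq]
    calc |x t - y t| ≤ |x t| + |y t| := abs_sub _ _
      _ ≤ Mx + My := add_le_add (hMx t ht) (hMy t ht)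
  obtain ⟨r, hr, hrδ⟩ := exists_lt_of_csInf_lt hne h
  exact ⟨r, hr.1, hrδ, hr.2⟩

/-! ### J1 continuity of `U` -/

lemma U_j1_est (hm : 0 ≤ m) (hk : 0 ≤ k) (hab : a ≤ b) {l : ℝ → ℝ} {r : ℝ} (hr : 0 ≤ r)
    (htc : TimeChange a b l)
    (hb : ∀ s ∈ Set.Icc a b, |l s - s| ≤ r ∧ |x s - y (l s)| ≤ r) :
    |U a b m k t x - U a b m k t y| ≤ (k + 1) * r := by
  have dir1 : U a b m k t x ≤ U a b m k t y + (k + 1) * r := by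
    refine csSup_le (((nonempty_Icc).2 hab).image _) ?_
    rintro _ ⟨s, hs, rfl⟩
    obtain ⟨hb1, hb2⟩ := hb s hs
    have hcl : cl m (x s) ≤ cl m (y (l s)) + r :=
      by have h := (abs_le.1 (cl_lip m (x s) (y (l s)))).2; linarith [le_abs_self (x s - y (l s)), (abs_le.1 (cl_lip m (x s) (y (l s)))).2, hb2]
    have habs : |l s - t| - r ≤ |s - t| := by
      have h := abs_sub_abs_le_abs_sub (l s - t) (s - t)
      rw [show l s - t - (s - t) = l s - s by ring] at h
      linarith
    have hterm : cl m (y (l s)) - k * |l s - t| ≤ U a b m k t y :=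
      le_U hm hk hab (htc.2.2.2.2 hs)
    have := mul_le_mul_of_nonneg_left habs hk
    dsimp; nlinarith
  have dir2 : U a b m k t y ≤ U a b m k t x + (k + 1) * r := by
    refine csSup_le (((nonempty_Icc).2 hab).image _) ?_
    rintro _ ⟨s, hs, rfl⟩
    obtain ⟨s', hs', hls'⟩ := timechange_surj hab htc hs
    obtain ⟨hb1, hb2⟩ := hb s' hs'
    have hcl : cl m (y s) ≤ cl m (x s') + r := by
      have h := (abs_le.1 (cl_lip m (y s) (x s'))).2
      rw [← hls'] at *
      have := (abs_le.1 hb2).2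
      have h3 := abs_sub_comm (x s') (y (l s'))
      linarith [(abs_le.1 (cl_lip m (y (l s')) (x s'))).2,
        (abs_le.1 ((abs_sub_comm (x s') (y (l s')) ▸ hb2 : |x s' - y (l s')| ≤ r))).2,
        le_abs_self (y (l s') - x s'), neg_abs_le (y (l s') - x s'), hb2]
    have habs : |s' - t| - r ≤ |s - t| := by
      have h := abs_sub_abs_le_abs_sub (s' - t) (s - t)
      rw [show s' - t - (s - t) = s' - s by ring, ← hls'] at h
      have h2 : |s' - l s'| = |l s' - s'| := abs_sub_comm _ _
      rw [← hls']
      linarith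
    have hterm : cl m (x s') - k * |s' - t| ≤ U a b m k t x := le_U hm hk hab hs'
    have := mul_le_mul_of_nonneg_left habs hk
    dsimp; nlinarith
  rw [abs_le]; constructor <;> linarith

lemma U_j1cont (hm : 0 ≤ m) (hk : 0 ≤ k) (hab : a ≤ b) (hx : CadlagOn a b x) :
    J1ContinuousAt a b (U a b m k t) x := by
  intro ε hε
  refine ⟨ε / (k + 2), by positivity, fun y hy hdist => ?_⟩
  obtain ⟨r, hr0, hrδ, l, htc, hb⟩ := j1_witness hab hx hy hdist
  have hest := U_j1_est (t := t) hm hk hab hr0 htc hb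
  have h2 : r * (k + 2) < ε := by
    rw [← lt_div_iff₀ (by positivity)]; exact hrδ
  calc |U a b m k t y - U a b m k t x| = |U a b m k t x - U a b m k t y| := abs_sub_comm _ _
    _ ≤ (k + 1) * r := hest
    _ < ε := by nlinarith

/-! ### Convergence of `U` in `k` at continuity points -/

lemma U_tendsto_k (hm : 0 ≤ m) (hab : a ≤ b) (ht : t ∈ Set.Icc a b)
    (hx : ContinuousWithinAt x (Set.Icc a b) t) :
    Tendsto (fun K : ℕ => U a b m K t x) atTop (nhds (cl m (x t))) := by
  rw [Metric.tendsto_atTop]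
  intro ε hε
  obtain ⟨η, hη, h1⟩ := Metric.continuousWithinAt_iff.1 hx (ε/2) (by positivity)
  refine ⟨⌈2*m/η⌉₊, fun K hK => ?_⟩
  have hK' : 2*m/η ≤ (K:ℝ) := le_trans (Nat.le_ceil _) (Nat.cast_le.2 hK)
  have hKη : 2*m ≤ (K:ℝ)*η := by rw [div_le_iff₀ hη] at hK'; nlinarith
  have hlow : cl m (x t) ≤ U a b m K t x := by
    have h0 := le_U (x := x) (k := (K:ℝ)) (t := t) hm (Nat.cast_nonneg K) hab ht
    simpa using h0
  have hup : U a b m K t x ≤ cl m (x t) + ε/2 := by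
    refine csSup_le (((nonempty_Icc).2 hab).image _) ?_
    rintro _ ⟨s, hs, rfl⟩
    dsimp only
    by_cases hst : |s - t| < η
    · have h2 := h1 hs (by rwa [Real.dist_eq])
      rw [Real.dist_eq] at h2
      have h4 : (0:ℝ) ≤ (K:ℝ)*|s-t| := mul_nonneg (Nat.cast_nonneg K) (abs_nonneg _)
      linarith [le_abs_self (cl m (x s) - cl m (x t)), cl_lip m (x s) (x t),
        le_abs_self (x s - x t)]
    · push_neg at hst
      have h4 : (K:ℝ)*η ≤ (K:ℝ)*|s-t| := mul_le_mul_of_nonneg_left hst (Nat.cast_nonneg K)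
      have h5 := cl_le hm (x s)
      have h6 := neg_le_cl m (x t)
      linarith
  rw [Real.dist_eq, abs_lt]
  constructor <;> linarith

/-! ### A dense grid and partial maxima -/

noncomputable def grid (a b : ℝ) : ℕ → ℝ := fun n =>
  if n = 0 then b else
    a + (b - a) * min 1 (((Nat.unpair (n-1)).1 : ℝ) / ((Nat.unpair (n-1)).2 + 1))

lemma grid_mem (hab : a ≤ b) (n : ℕ) : grid a b n ∈ Set.Icc a b := by
  unfold grid
  split
  · exact right_mem_Icc.2 hab
  · set c := min 1 (((Nat.unpair (n-1)).1 : ℝ) / ((Nat.unpair (n-1)).2 + 1)) with hc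
    have hc0 : 0 ≤ c := le_min one_pos.le (by positivity)
    have hc1 : c ≤ 1 := min_le_left _ _
    constructor
    · nlinarith
    · nlinarith

lemma grid_zero : grid a b 0 = b := by simp [grid]

lemma grid_dense (hab : a < b) {s η : ℝ} (hs : a ≤ s) (hsb : s < b) (hη : 0 < η) :
    ∃ n, s < grid a b n ∧ grid a b n < s + η ∧ grid a b n ≤ b := by
  have hba : (0:ℝ) < b - a := by linarith
  set η' := min η (b - s) with hη'def
  have hη' : 0 < η' := lt_min hη (by linarith)
  have hlt : (s - a)/(b-a) < (s + η' - a)/(b - a) := by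
    apply (div_lt_div_iff_of_pos_right hba).2; linarith
  obtain ⟨q, hq1, hq2⟩ := exists_rat_btwn hlt
  have hble : (s + η' - a)/(b - a) ≤ 1 := by
    rw [div_le_one hba]
    have : η' ≤ b - s := min_le_right _ _
    linarith
  have hq0 : (0:ℝ) ≤ (q:ℝ) := by
    have h0 : (0:ℝ) ≤ (s - a)/(b-a) := div_nonneg (by linarith) hba.le
    linarith
  have hq1' : (q:ℝ) ≤ 1 := by linarith
  have hqnum : (0:ℤ) ≤ q.num := by
    rw [Rat.num_nonneg]; exact_mod_cast hq0
  refine ⟨Nat.pair q.num.toNat (q.den - 1) + 1, ?_, ?_, ?_⟩ <;>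
  · have hne : Nat.pair q.num.toNat (q.den - 1) + 1 ≠ 0 := Nat.succ_ne_zero _
    have hgr : grid a b (Nat.pair q.num.toNat (q.den - 1) + 1) = a + (b - a) * (q:ℝ) := by
      unfold grid
      rw [if_neg hne]
      congr 1
      simp only [Nat.add_sub_cancel, Nat.unpair_pair]
      have hden : ((q.den - 1 : ℕ) : ℝ) + 1 = (q.den : ℝ) := by
        have : 1 ≤ q.den := q.den_pos
        push_cast [Nat.cast_sub this]
        ring
      have hnum : ((q.num.toNat : ℕ) : ℝ) = (q.num : ℝ) := by
        rw [← Int.cast_natCast, Int.toNat_of_nonneg hqnum]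
      rw [hden]
      have hcast : ((q.num.toNat : ℕ) : ℝ) / (q.den : ℝ) = (q:ℝ) := by
        rw [hnum, Rat.cast_def]
      rw [hcast, min_eq_right hq1']
    rw [hgr]
    first
    | (rw [div_lt_iff₀ hba] at hq1; linarith)
    | (rw [lt_div_iff₀ hba] at hq2
       have hmin1 : η' ≤ η := min_le_left _ _
       have hmin2 : η' ≤ b - s := min_le_right _ _
       first
       | linarith
       | nlinarith)

noncomputable def pm (a b m k t : ℝ) (x : ℝ → ℝ) (j : ℕ) : ℝ :=
  (Finset.range (j+1)).sup' Finset.nonempty_range_add_one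
    (fun n => cl m (x (grid a b n)) - k * |grid a b n - t|)

lemma pm_mono (hm : 0 ≤ m) : Monotone (pm a b m k t x) := by
  intro j j' hj
  exact Finset.sup'_mono _ (Finset.range_subset_range.2 (Nat.succ_le_succ hj)) Finset.nonempty_range_add_one

lemma pm_le_U (hm : 0 ≤ m) (hk : 0 ≤ k) (hab : a ≤ b) (j : ℕ) :
    pm a b m k t x j ≤ U a b m k t x := by
  refine Finset.sup'_le _ _ fun n _ => ?_
  exact le_U hm hk hab (grid_mem hab n)

lemma le_pm (hm : 0 ≤ m) {n j : ℕ} (hn : n ≤ j) :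
    cl m (x (grid a b n)) - k * |grid a b n - t| ≤ pm a b m k t x j := by
  have h : n ∈ Finset.range (j+1) := Finset.mem_range.2 (by omega)
  exact Finset.le_sup' (fun n => cl m (x (grid a b n)) - k * |grid a b n - t|) h

lemma pm_tendsto (hab : a < b) (hm : 0 ≤ m) (hk : 0 ≤ k) (hx : CadlagOn a b x) :
    Tendsto (pm a b m k t x) atTop (nhds (U a b m k t x)) := by
  have hbdd : BddAbove (Set.range (pm a b m k t x)) := by
    refine ⟨U a b m k t x, ?_⟩
    rintro _ ⟨j, rfl⟩
    exact pm_le_U hm hk hab.le j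
  have htend := tendsto_atTop_ciSup (pm_mono (x := x) (a := a) (b := b) (k := k) (t := t) hm) hbdd
  have hc : (⨆ j, pm a b m k t x j) = U a b m k t x := by
    refine le_antisymm (ciSup_le fun j => pm_le_U hm hk hab.le j) ?_
    refine csSup_le (((nonempty_Icc).2 hab.le).image _) ?_
    rintro _ ⟨s, hs, rfl⟩
    dsimp only
    rcases eq_or_lt_of_le hs.2 with hsb | hsb
    · have h0 : cl m (x (grid a b 0)) - k * |grid a b 0 - t| ≤ pm a b m k t x 0 :=
        le_pm hm le_rfl
      rw [grid_zero] at h0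
      rw [hsb]
      exact h0.trans (le_ciSup hbdd 0)
    · have hseq : ∀ i : ℕ, ∃ n, s < grid a b n ∧ grid a b n < s + 1/(i+1) ∧ grid a b n ≤ b :=
        fun i => grid_dense hab hs.1 hsb (by positivity)
      choose nn hn1 hn2 hn3 using hseq
      set d : ℕ → ℝ := fun i => grid a b (nn i) with hd
      have hdtend : Tendsto d atTop (nhds s) := by
        have hup : Tendsto (fun i : ℕ => s + 1/((i:ℝ)+1)) atTop (nhds s) := by
          have := tendsto_one_div_add_atTop_nhds_zero_nat (𝕜 := ℝ)
          have h2 := Tendsto.add (tendsto_const_nhds (x := s) (f := atTop)) this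
          simpa using h2
        refine tendsto_of_tendsto_of_tendsto_of_le_of_le tendsto_const_nhds hup
          (fun i => (hn1 i).le) (fun i => ?_)
        exact (hn2 i).le
      have hdio : Tendsto d atTop (nhdsWithin s (Set.Ioi s)) := by
        rw [tendsto_nhdsWithin_iff]
        exact ⟨hdtend, Filter.Eventually.of_forall fun i => hn1 i⟩
      have hxr := (hx.1 s ⟨hs.1, hsb⟩).comp hdio
      have hterm : Tendsto (fun i => cl m (x (d i)) - k * |d i - t|) atTop
          (nhds (cl m (x s) - k * |s - t|)) := by
        refine Tendsto.sub ?_ ?_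
        · exact ((continuous_cl m).continuousAt).tendsto.comp hxr
        · refine Tendsto.const_mul _ ?_
          have hcont : Continuous fun u : ℝ => |u - t| :=
            continuous_abs.comp (continuous_id.sub continuous_const)
          exact (hcont.continuousAt).tendsto.comp hdtend
      refine le_of_tendsto hterm (Filter.Eventually.of_forall fun i => ?_)
      calc cl m (x (d i)) - k * |d i - t| ≤ pm a b m k t x (nn i) := le_pm hm le_rfl
        _ ≤ ⨆ j, pm a b m k t x j := le_ciSup hbdd (nn i)
  rwa [hc] at htend

lemma pm_measurable {Ω : Type*} [MeasurableSpace Ω] {Y : Ω → ℝ → ℝ}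
    (hY : ∀ u, Measurable fun ω => Y ω u) (j : ℕ) :
    Measurable fun ω => pm a b m k t (Y ω) j := by
  have heq : (fun ω => pm a b m k t (Y ω) j) = (Finset.range (j+1)).sup'
      Finset.nonempty_range_add_one (fun n ω => cl m (Y ω (grid a b n)) - k * |grid a b n - t|) := by
    ext ω
    rw [pm, Finset.sup'_apply]
  rw [heq]
  exact Finset.measurable_sup' _ fun n _ =>
    ((continuous_cl m).measurable.comp (hY (grid a b n))).sub measurable_const

lemma U_aemeasurable {Ω : Type*} [MeasurableSpace Ω] {μ : Measure Ω} {Y : Ω → ℝ → ℝ}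
    (hab : a < b) (hm : 0 ≤ m) (hk : 0 ≤ k)
    (hY : ∀ u, Measurable fun ω => Y ω u) (hcadY : ∀ᵐ ω ∂μ, CadlagOn a b (Y ω)) :
    AEMeasurable (fun ω => U a b m k t (Y ω)) μ := by
  refine aemeasurable_of_tendsto_metrizable_ae atTop
    (fun j => (pm_measurable (a := a) (b := b) (m := m) (k := k) (t := t) hY j).aemeasurable) ?_
  filter_upwards [hcadY] with ω hω
  exact pm_tendsto hab hm hk hω

/-! ### Càdlàg / continuity of expectations -/

lemma int_cadlag {Ω : Type*} [MeasurableSpace Ω] (μ : Measure Ω) [IsProbabilityMeasure μ]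
    {Y : Ω → ℝ → ℝ} (hab : a < b) (hmeasY : ∀ t, Measurable fun ω => Y ω t)
    (hcadY : ∀ᵐ ω ∂μ, CadlagOn a b (Y ω))
    (hbdY : ∀ᵐ ω ∂μ, ∀ t ∈ Set.Icc a b, |Y ω t| ≤ m) :
    CadlagOn a b (fun t => ∫ ω, Y ω t ∂μ) := by
  constructor
  · intro t ht
    apply tendsto_integral_filter_of_dominated_convergence (bound := fun _ => m)
    · exact Filter.Eventually.of_forall fun s => (hmeasY s).aestronglyMeasurable
    · filter_upwards [Ioo_mem_nhdsGT_of_mem (⟨le_rfl, ht.2⟩ : t ∈ Set.Ico t b)] with s hs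
      filter_upwards [hbdY] with ω hω
      rw [Real.norm_eq_abs]
      exact hω s ⟨ht.1.trans hs.1.le, hs.2.le⟩
    · exact integrable_const m
    · filter_upwards [hcadY] with ω hω
      exact hω.1 t ht
  · intro t ht
    classical
    have hL : ∀ᵐ ω ∂μ, ∃ L, Tendsto (Y ω) (nhdsWithin t (Set.Iio t)) (nhds L) :=
      hcadY.mono fun ω hω => hω.2 t ht
    set g : Ω → ℝ := fun ω =>
      if h : ∃ L, Tendsto (Y ω) (nhdsWithin t (Set.Iio t)) (nhds L) then h.choose else 0 with hgdef
    have hg : ∀ᵐ ω ∂μ, Tendsto (Y ω) (nhdsWithin t (Set.Iio t)) (nhds (g ω)) := by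
      filter_upwards [hL] with ω hω
      simp only [hgdef, dif_pos hω]
      exact hω.choose_spec
    refine ⟨∫ ω, g ω ∂μ, ?_⟩
    apply tendsto_integral_filter_of_dominated_convergence (bound := fun _ => m)
    · exact Filter.Eventually.of_forall fun s => (hmeasY s).aestronglyMeasurable
    · filter_upwards [Ioo_mem_nhdsLT_of_mem (⟨ht.1, le_rfl⟩ : t ∈ Set.Ioc a t)] with s hs
      filter_upwards [hbdY] with ω hω
      rw [Real.norm_eq_abs]
      exact hω s ⟨hs.1.le, hs.2.le.trans ht.2⟩
    · exact integrable_const m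
    · exact hg

lemma int_contOn {Ω : Type*} [MeasurableSpace Ω] (μ : Measure Ω) [IsProbabilityMeasure μ]
    {Y : Ω → ℝ → ℝ} (hab : a ≤ b) (hmeasY : ∀ t, Measurable fun ω => Y ω t)
    (hbdY : ∀ᵐ ω ∂μ, ∀ t ∈ Set.Icc a b, |Y ω t| ≤ m)
    (hnofix : ∀ t ∈ Set.Icc a b, ∀ᵐ ω ∂μ, ContinuousWithinAt (Y ω) (Set.Icc a b) t) :
    ContinuousOn (fun t => ∫ ω, Y ω t ∂μ) (Set.Icc a b) := by
  intro t ht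
  have : Tendsto (fun s => ∫ ω, Y ω s ∂μ) (nhdsWithin t (Set.Icc a b))
      (nhds (∫ ω, Y ω t ∂μ)) := by
    apply tendsto_integral_filter_of_dominated_convergence (bound := fun _ => m)
    · exact Filter.Eventually.of_forall fun s => (hmeasY s).aestronglyMeasurable
    · filter_upwards [self_mem_nhdsWithin] with s hs
      filter_upwards [hbdY] with ω hω
      rw [Real.norm_eq_abs]
      exact hω s hs
    · exact integrable_const m
    · exact hnofix t ht
  exact this

lemma cadlag_of_contOn {f : ℝ → ℝ} (hab : a < b) (hf : ContinuousOn f (Set.Icc a b)) :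
    CadlagOn a b f := by
  constructor
  · intro t ht
    have h1 : nhdsWithin t (Set.Ioi t ∩ Set.Iio b) = nhdsWithin t (Set.Ioi t) :=
      nhdsWithin_inter_of_mem' (nhdsWithin_le_nhds (Iio_mem_nhds ht.2))
    rw [← h1]
    exact (hf t ⟨ht.1, ht.2.le⟩).mono_left
      (nhdsWithin_mono t (fun s hs => ⟨ht.1.trans hs.1.le, hs.2.le⟩))
  · intro t ht
    refine ⟨f t, ?_⟩
    have h1 : nhdsWithin t (Set.Iio t ∩ Set.Ioi a) = nhdsWithin t (Set.Iio t) :=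
      nhdsWithin_inter_of_mem' (nhdsWithin_le_nhds (Ioi_mem_nhds ht.1))
    rw [← h1]
    exact (hf t ⟨ht.1.le, ht.2⟩).mono_left
      (nhdsWithin_mono t (fun s hs => ⟨hs.2.le, hs.1.le.trans ht.2⟩))

/-! ### A Dini-type lemma -/

lemma dini_step (hab : a < b) {u : ℕ → ℝ → ℝ} {φ : ℝ → ℝ}
    (hanti : ∀ t ∈ Set.Icc a b, ∀ {k k' : ℕ}, k ≤ k' → u k' t ≤ u k t)
    (hlip : ∀ (k : ℕ) (t t' : ℝ), |u k t - u k t'| ≤ (k : ℝ) * |t - t'|)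
    (htend : ∀ t ∈ Set.Icc a b, Tendsto (fun k => u k t) atTop (nhds (φ t)))
    (hφ : ContinuousOn φ (Set.Icc a b)) {ε : ℝ} (hε : 0 < ε) :
    ∃ K : ℕ, ∀ t ∈ Set.Icc a b, u K t ≤ φ t + ε := by
  have key : ∀ t ∈ Set.Icc a b, ∃ ρ > 0, ∃ k : ℕ,
      ∀ s ∈ Metric.ball t ρ ∩ Set.Icc a b, u k s ≤ φ s + ε := by
    intro t ht
    obtain ⟨N, hN⟩ := (Metric.tendsto_atTop.1 (htend t ht)) (ε/3) (by positivity)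
    have hNt : u N t ≤ φ t + ε/3 := by
      have := hN N le_rfl
      rw [Real.dist_eq, abs_lt] at this
      linarith [this.2]
    obtain ⟨η, hη, hφt⟩ := Metric.continuousWithinAt_iff.1 (hφ t ht) (ε/3) (by positivity)
    refine ⟨min η (ε/(3*(N+1))), lt_min hη (by positivity), N, fun s hs => ?_⟩
    obtain ⟨hball, hsI⟩ := hs
    rw [Metric.mem_ball, Real.dist_eq] at hball
    have h1 : u N s ≤ u N t + (N:ℝ) * |s - t| := by
      have := (abs_le.1 (hlip N s t)).2; linarith [le_abs_self (u N s - u N t), hlip N s t]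
    have h2 : (N:ℝ) * |s - t| ≤ ε/3 := by
      have hb1 : |s - t| ≤ ε/(3*(N+1)) := le_trans hball.le (min_le_right _ _)
      have : (N:ℝ) * |s - t| ≤ (N:ℝ) * (ε/(3*(N+1))) :=
        mul_le_mul_of_nonneg_left hb1 (Nat.cast_nonneg N)
      have hN1 : (0:ℝ) < (N:ℝ) + 1 := by positivity
      calc (N:ℝ) * |s - t| ≤ (N:ℝ) * (ε/(3*(N+1))) := this
        _ ≤ ε/3 := by
            rw [show (N:ℝ) * (ε/(3*((N:ℝ)+1))) = ε * N / (3*((N:ℝ)+1)) by ring,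
              div_le_div_iff₀ (by positivity) (by norm_num : (0:ℝ) < 3)]
            nlinarith [Nat.cast_nonneg (α := ℝ) N, hε.le]
    have h3 : φ t ≤ φ s + ε/3 := by
      have := hφt hsI (by rw [Real.dist_eq]; exact lt_of_lt_of_le hball (min_le_left _ _))
      rw [Real.dist_eq, abs_lt] at this
      linarith [this.1]
    linarith
  choose! ρ hρ kk hkk using key
  obtain ⟨F, hF⟩ := IsCompact.elim_finite_subcover (isCompact_Icc (a := a) (b := b))
    (fun t : Set.Icc a b => Metric.ball t.1 (ρ t.1))
    (fun t => Metric.isOpen_ball)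
    (fun s hs => Set.mem_iUnion.2 ⟨⟨s, hs⟩, Metric.mem_ball_self (hρ s hs)⟩)
  refine ⟨F.sup (fun i => kk i.1), fun s hs => ?_⟩
  have := hF hs
  rw [Set.mem_iUnion₂] at this
  obtain ⟨i, hiF, hi⟩ := this
  have hK : kk i.1 ≤ F.sup (fun i => kk i.1) :=
    Finset.le_sup (f := fun i : Set.Icc a b => kk i.1) hiF
  calc u (F.sup (fun i => kk i.1)) s ≤ u (kk i.1) s := hanti s hs hK
    _ ≤ φ s + ε := hkk i.1 i.2 s ⟨hi, hs⟩

/-! ### Negation transfer -/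

lemma cadlag_neg (hx : CadlagOn a b x) : CadlagOn a b (fun s => -x s) :=
  ⟨fun t ht => (hx.1 t ht).neg, fun t ht => (hx.2 t ht).elim fun L hL => ⟨-L, hL.neg⟩⟩

lemma j1dist_neg : J1dist a b (fun s => -x s) (fun s => -y s) = J1dist a b x y := by
  unfold J1dist
  congr 1
  ext r
  simp only [Set.mem_setOf_eq]
  constructor <;> rintro ⟨hr, l, htc, hb⟩ <;> refine ⟨hr, l, htc, fun t ht => ⟨(hb t ht).1, ?_⟩⟩
  · have h2 := (hb t ht).2
    rwa [show -x t - -y (l t) = -(x t - y (l t)) by ring, abs_neg] at h2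
  · have h2 := (hb t ht).2
    rwa [show -x t - -y (l t) = -(x t - y (l t)) by ring, abs_neg]

lemma weak_neg {Ω : Type*} [MeasurableSpace Ω] {μ : Measure Ω}
    {X : ℕ → Ω → ℝ → ℝ} {X₀ : Ω → ℝ → ℝ} (h : WeakConvJ1 μ a b X X₀) :
    WeakConvJ1 μ a b (fun n ω s => -(X n ω s)) (fun ω s => -(X₀ ω s)) := by
  intro F hFbd hFcont
  obtain ⟨C, hC⟩ := hFbd
  exact h (fun x => F (fun s => -(x s))) ⟨C, fun x => hC _⟩ (fun x hx ε hε => by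
    obtain ⟨δ, hδ, hd⟩ := hFcont (fun s => -(x s)) (cadlag_neg hx) ε hε
    exact ⟨δ, hδ, fun y hy hdist => hd (fun s => -(y s)) (cadlag_neg hy)
      (by rwa [j1dist_neg])⟩)

/-! ### Integrability helpers -/

lemma integrable_U_comp {Ω : Type*} [MeasurableSpace Ω] {μ : Measure Ω}
    [IsProbabilityMeasure μ] {Y : Ω → ℝ → ℝ} (hab : a < b) (hm : 0 ≤ m) (hk : 0 ≤ k)
    (hY : ∀ u, Measurable fun ω => Y ω u) (hcadY : ∀ᵐ ω ∂μ, CadlagOn a b (Y ω)) :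
    Integrable (fun ω => U a b m k t (Y ω)) μ :=
  (integrable_const (m + k * |a - t|)).mono'
    (U_aemeasurable hab hm hk hY hcadY).aestronglyMeasurable
    (Filter.Eventually.of_forall fun ω => by
      rw [Real.norm_eq_abs]; exact abs_U_le hm hk hab.le)

lemma integrable_eval {Ω : Type*} [MeasurableSpace Ω] {μ : Measure Ω}
    [IsProbabilityMeasure μ] {Y : Ω → ℝ → ℝ} (ht : t ∈ Set.Icc a b)
    (hY : Measurable fun ω => Y ω t)
    (hbdY : ∀ᵐ ω ∂μ, ∀ s ∈ Set.Icc a b, |Y ω s| ≤ m) :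
    Integrable (fun ω => Y ω t) μ :=
  (integrable_const m).mono' hY.aestronglyMeasurable
    (hbdY.mono fun ω h => by rw [Real.norm_eq_abs]; exact h t ht)

lemma u_int_lip {Ω : Type*} [MeasurableSpace Ω] {μ : Measure Ω}
    [IsProbabilityMeasure μ] {Y : Ω → ℝ → ℝ} (hab : a < b) (hm : 0 ≤ m) (hk : 0 ≤ k)
    (hY : ∀ u, Measurable fun ω => Y ω u) (hcadY : ∀ᵐ ω ∂μ, CadlagOn a b (Y ω))
    (t t' : ℝ) :
    |(∫ ω, U a b m k t (Y ω) ∂μ) - (∫ ω, U a b m k t' (Y ω) ∂μ)| ≤ k * |t - t'| := by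
  have h1 := integrable_U_comp (t := t) hab hm hk hY hcadY (μ := μ)
  have h2 := integrable_U_comp (t := t') hab hm hk hY hcadY (μ := μ)
  rw [← integral_sub h1 h2]
  calc |∫ ω, (U a b m k t (Y ω) - U a b m k t' (Y ω)) ∂μ|
      ≤ ∫ ω, |U a b m k t (Y ω) - U a b m k t' (Y ω)| ∂μ := by
        have := norm_integral_le_integral_norm (μ := μ)
          (f := fun ω => U a b m k t (Y ω) - U a b m k t' (Y ω))
        simpa [Real.norm_eq_abs] using this
    _ ≤ ∫ _ω, (k * |t - t'|) ∂μ := by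
        refine integral_mono_ae (h1.sub h2).abs (integrable_const _) ?_
        exact Filter.Eventually.of_forall fun ω => U_lip_t hm hk hab.le t t'
    _ = k * |t - t'| := by simp

/-! ### Master one-sided uniform bound -/

lemma master {Ω : Type*} [MeasurableSpace Ω] (μ : Measure Ω) [IsProbabilityMeasure μ]
    (hab : a < b) (hm : 0 < m) {X : ℕ → Ω → ℝ → ℝ} {X₀ : Ω → ℝ → ℝ}
    (hmeas : ∀ n t, Measurable fun ω => X n ω t) (hmeas₀ : ∀ t, Measurable fun ω => X₀ ω t)
    (hcad : ∀ n, ∀ᵐ ω ∂μ, CadlagOn a b (X n ω)) (hcad₀ : ∀ᵐ ω ∂μ, CadlagOn a b (X₀ ω))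
    (hbd : ∀ᵐ ω ∂μ, ∀ n, ∀ t ∈ Set.Icc a b, |X n ω t| ≤ m)
    (hbd₀ : ∀ᵐ ω ∂μ, ∀ t ∈ Set.Icc a b, |X₀ ω t| ≤ m)
    (hweak : WeakConvJ1 μ a b X X₀)
    (hnofix : ∀ t ∈ Set.Icc a b, ∀ᵐ ω ∂μ, ContinuousWithinAt (X₀ ω) (Set.Icc a b) t)
    {ε : ℝ} (hε : 0 < ε) :
    ∃ N, ∀ n ≥ N, ∀ t ∈ Set.Icc a b,
      (∫ ω, X n ω t ∂μ) - (∫ ω, X₀ ω t ∂μ) ≤ ε := by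
  set φ : ℝ → ℝ := fun t => ∫ ω, X₀ ω t ∂μ with hφdef
  set u : ℕ → ℝ → ℝ := fun k t => ∫ ω, U a b m k t (X₀ ω) ∂μ with hudef
  set un : ℕ → ℕ → ℝ → ℝ := fun n k t => ∫ ω, U a b m k t (X n ω) ∂μ with hundef
  have hm' : (0:ℝ) ≤ m := hm.le
  have hbdn : ∀ n, ∀ᵐ ω ∂μ, ∀ t ∈ Set.Icc a b, |X n ω t| ≤ m :=
    fun n => hbd.mono fun ω h => h n
  have hanti : ∀ t ∈ Set.Icc a b, ∀ {k k' : ℕ}, k ≤ k' → u k' t ≤ u k t := by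
    intro t ht k k' hkk
    refine integral_mono_ae (integrable_U_comp hab hm' (Nat.cast_nonneg _) hmeas₀ hcad₀)
      (integrable_U_comp hab hm' (Nat.cast_nonneg _) hmeas₀ hcad₀) ?_
    exact Filter.Eventually.of_forall fun ω =>
      U_anti_k hm' hab.le (Nat.cast_nonneg k) (by exact_mod_cast hkk)
  have hlip : ∀ (k : ℕ) (t t' : ℝ), |u k t - u k t'| ≤ (k:ℝ) * |t - t'| :=
    fun k t t' => u_int_lip hab hm' (Nat.cast_nonneg k) hmeas₀ hcad₀ t t'
  have hlipn : ∀ n (k : ℕ) (t t' : ℝ), |un n k t - un n k t'| ≤ (k:ℝ) * |t - t'| :=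
    fun n k t t' => u_int_lip hab hm' (Nat.cast_nonneg k) (hmeas n) (hcad n) t t'
  have htend : ∀ t ∈ Set.Icc a b, Tendsto (fun k => u k t) atTop (nhds (φ t)) := by
    intro t ht
    apply tendsto_integral_filter_of_dominated_convergence (bound := fun _ => m)
    · exact Filter.Eventually.of_forall fun k =>
        (U_aemeasurable hab hm' (Nat.cast_nonneg k) hmeas₀ hcad₀).aestronglyMeasurable
    · refine Filter.Eventually.of_forall fun k => Filter.Eventually.of_forall fun ω => ?_
      rw [Real.norm_eq_abs, abs_le]
      refine ⟨?_, U_le hm' (Nat.cast_nonneg k) hab.le⟩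
      have h0 := le_U (x := X₀ ω) (k := ((k:ℕ):ℝ)) (t := t) hm' (Nat.cast_nonneg k) hab.le ht
      simp only [sub_self, abs_zero, mul_zero, sub_zero] at h0
      linarith [neg_le_cl m (X₀ ω t)]
    · exact integrable_const m
    · filter_upwards [hnofix t ht, hbd₀] with ω h1 h2
      have h3 := U_tendsto_k (x := X₀ ω) (t := t) hm' hab.le ht h1
      rwa [cl_eq (h2 t ht)] at h3
  have hφcont : ContinuousOn φ (Set.Icc a b) := int_contOn μ hab.le hmeas₀ hbd₀ hnofix
  obtain ⟨K, hK⟩ := dini_step hab hanti hlip htend hφcont (show 0 < ε/3 by positivity)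
  have hwk : ∀ t : ℝ, Tendsto (fun n => un n K t) atTop (nhds (u K t)) := fun t =>
    hweak (U a b m K t)
      ⟨m + K * |a - t|, fun x => abs_U_le hm' (Nat.cast_nonneg K) hab.le⟩
      (fun x hx => U_j1cont hm' (Nat.cast_nonneg K) hab.le hx)
  set M : ℕ := ⌈9*((K:ℝ)+1)*(b-a)/ε⌉₊ with hMdef
  set h : ℝ := (b - a)/((M:ℝ)+1) with hhdef
  have hh0 : 0 < h := by
    rw [hhdef]; exact div_pos (by linarith) (by positivity)
  have h2' : 9*((K:ℝ)+1)*(b-a) ≤ ε*((M:ℝ)+1) := by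
    have h1 : 9*((K:ℝ)+1)*(b-a)/ε ≤ (M:ℝ)+1 := (Nat.le_ceil _).trans (by linarith)
    rw [div_le_iff₀ hε] at h1; linarith
  have hhsmall : (K:ℝ) * h ≤ ε/9 := by
    rw [hhdef, show (K:ℝ) * ((b-a)/((M:ℝ)+1)) = (K:ℝ)*(b-a)/((M:ℝ)+1) by ring,
      div_le_div_iff₀ (by positivity) (by norm_num : (0:ℝ) < 9)]
    nlinarith [hab.le, Nat.cast_nonneg (α := ℝ) K]
  set tj : ℕ → ℝ := fun j => a + h * j with htjdef
  have hhM : h * ((M:ℝ)+1) = b - a := by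
    rw [hhdef]; field_simp
  have hnear : ∀ t ∈ Set.Icc a b, ∃ j ≤ M+1, |t - tj j| ≤ h := by
    intro t ht
    set j : ℕ := ⌊(t - a)/h⌋₊ with hjdef
    have hta : 0 ≤ (t - a)/h := div_nonneg (by linarith [ht.1]) hh0.le
    have hj1 : (j:ℝ) ≤ (t-a)/h := Nat.floor_le hta
    have hj2 : (t-a)/h < (j:ℝ) + 1 := Nat.lt_floor_add_one _
    have hjM : j ≤ M+1 := by
      have hb1 : (t-a)/h ≤ ((M:ℝ)+1) := by
        rw [div_le_iff₀ hh0, mul_comm]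
        rw [hhM]; linarith [ht.2]
      have : (j:ℝ) ≤ ((M:ℝ)+1) := hj1.trans hb1
      exact_mod_cast this
    refine ⟨j, hjM, ?_⟩
    have hl : (j:ℝ) * h ≤ t - a := (le_div_iff₀ hh0).1 hj1
    have hr : t - a < ((j:ℝ)+1) * h := (div_lt_iff₀ hh0).1 hj2
    rw [htjdef, abs_le]
    constructor <;> simp only [] <;> nlinarith
  have hNj : ∀ j : ℕ, ∃ Nj, ∀ n ≥ Nj, |un n K (tj j) - u K (tj j)| < ε/9 := by
    intro j
    obtain ⟨Nj, hNjs⟩ := Metric.tendsto_atTop.1 (hwk (tj j)) (ε/9) (by positivity)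
    exact ⟨Nj, fun n hn => by have := hNjs n hn; rwa [Real.dist_eq] at this⟩
  choose Nj hNjs using hNj
  refine ⟨(Finset.range (M+2)).sup Nj, fun n hn t ht => ?_⟩
  obtain ⟨j, hjM, hjt⟩ := hnear t ht
  have hnNj : Nj j ≤ n :=
    le_trans (Finset.le_sup (f := Nj) (Finset.mem_range.2 (by omega))) hn
  have e1 : (∫ ω, X n ω t ∂μ) ≤ un n K t := by
    refine integral_mono_ae (integrable_eval ht (hmeas n t) (hbdn n))
      (integrable_U_comp hab hm' (Nat.cast_nonneg K) (hmeas n) (hcad n)) ?_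
    filter_upwards [hbdn n] with ω hω
    have h1 : X n ω t = cl m (X n ω t) := (cl_eq (hω t ht)).symm
    have h2 := le_U (x := X n ω) (k := ((K:ℕ):ℝ)) (t := t) hm' (Nat.cast_nonneg K) hab.le ht
    simp only [sub_self, abs_zero, mul_zero, sub_zero] at h2
    rw [h1]; exact h2
  have eKh : (K:ℝ) * |t - tj j| ≤ (K:ℝ) * h :=
    mul_le_mul_of_nonneg_left hjt (Nat.cast_nonneg K)
  have e2 : un n K t ≤ un n K (tj j) + (K:ℝ) * h := by
    have := hlipn n K t (tj j)
    linarith [le_abs_self (un n K t - un n K (tj j))]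
  have e3 : un n K (tj j) ≤ u K (tj j) + ε/9 := by
    have := hNjs j n hnNj
    linarith [le_abs_self (un n K (tj j) - u K (tj j))]
  have e4 : u K (tj j) ≤ u K t + (K:ℝ) * h := by
    have := hlip K (tj j) t
    have habs : |tj j - t| = |t - tj j| := abs_sub_comm _ _
    rw [habs] at this
    linarith [le_abs_self (u K (tj j) - u K t)]
  have e5 : u K t ≤ φ t + ε/3 := hK t ht
  have : (∫ ω, X n ω t ∂μ) ≤ φ t + ε := by linarith
  linarith

end St5

/-- If `X_n` are random elements of `D([a,b])` uniformly bounded by `m`, converging weakly in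
the `J_1` topology to `X₀` which has no fixed jumps, then `𝔼[X_n]` and `𝔼[X₀]` are càdlàg,
`𝔼[X₀]` is continuous on `[a,b]`, and `𝔼[X_n] → 𝔼[X₀]` uniformly on `[a,b]`. -/
theorem stmt5 (a b : ℝ) (hab : a < b) {Ω : Type*} [MeasurableSpace Ω] (μ : Measure Ω)
    [IsProbabilityMeasure μ] (m : ℝ) (hm : 0 < m)
    (X : ℕ → Ω → ℝ → ℝ) (X₀ : Ω → ℝ → ℝ)
    (hmeas : ∀ n t, Measurable fun ω => X n ω t) (hmeas₀ : ∀ t, Measurable fun ω => X₀ ω t)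
    (hcad : ∀ n, ∀ᵐ ω ∂μ, CadlagOn a b (X n ω)) (hcad₀ : ∀ᵐ ω ∂μ, CadlagOn a b (X₀ ω))
    (hbd : ∀ᵐ ω ∂μ, ∀ n, ∀ t ∈ Set.Icc a b, |X n ω t| ≤ m)
    (hbd₀ : ∀ᵐ ω ∂μ, ∀ t ∈ Set.Icc a b, |X₀ ω t| ≤ m)
    (hweak : WeakConvJ1 μ a b X X₀)
    (hnofix : ∀ t ∈ Set.Icc a b, ∀ᵐ ω ∂μ, ContinuousWithinAt (X₀ ω) (Set.Icc a b) t) :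
    (∀ n, CadlagOn a b fun t => ∫ ω, X n ω t ∂μ) ∧
    (CadlagOn a b fun t => ∫ ω, X₀ ω t ∂μ) ∧
    ContinuousOn (fun t => ∫ ω, X₀ ω t ∂μ) (Set.Icc a b) ∧
    TendstoUniformlyOn (fun n t => ∫ ω, X n ω t ∂μ) (fun t => ∫ ω, X₀ ω t ∂μ) atTop
      (Set.Icc a b) := by
  refine ⟨fun n => St5.int_cadlag (m := m) μ hab (hmeas n) (hcad n)
      (hbd.mono fun ω h => h n),
    St5.cadlag_of_contOn hab (St5.int_contOn (m := m) μ hab.le hmeas₀ hbd₀ hnofix),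
    St5.int_contOn (m := m) μ hab.le hmeas₀ hbd₀ hnofix, ?_⟩
  rw [Metric.tendstoUniformlyOn_iff]
  intro ε hε
  obtain ⟨N₁, h₁⟩ := St5.master μ hab hm hmeas hmeas₀ hcad hcad₀ hbd hbd₀ hweak hnofix
    (show 0 < ε/2 by positivity)
  obtain ⟨N₂, h₂⟩ := St5.master μ hab hm
    (X := fun n ω s => -(X n ω s)) (X₀ := fun ω s => -(X₀ ω s))
    (fun n t => (hmeas n t).neg) (fun t => (hmeas₀ t).neg)
    (fun n => (hcad n).mono fun ω h => St5.cadlag_neg h)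
    (hcad₀.mono fun ω h => St5.cadlag_neg h)
    (hbd.mono fun ω h => fun n t ht => by rw [abs_neg]; exact h n t ht)
    (hbd₀.mono fun ω h => fun t ht => by rw [abs_neg]; exact h t ht)
    (St5.weak_neg hweak)
    (fun t ht => (hnofix t ht).mono fun ω h => h.neg)
    (show 0 < ε/2 by positivity)
  rw [eventually_atTop]
  refine ⟨max N₁ N₂, fun n hn t ht => ?_⟩
  have e1 := h₁ n (le_trans (le_max_left _ _) hn) t ht
  have e2 := h₂ n (le_trans (le_max_right _ _) hn) t ht
  rw [integral_neg, integral_neg] at e2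
  rw [Real.dist_eq, abs_lt]
  constructor <;> linarith
end

section
/- Let (x_n), (y_n) be sequences in D(I) converging in the J_1 topology to x and y respectively, where x and y have no common discontinuity points (Disc(x) ∩ Disc(y) = ∅). Then x_n + y_n converges to x + y in the J_1 topology. -/
open MeasureTheory ProbabilityTheory Filter Set

/- ### Auxiliary lemmas -/

/-- Local control for a càdlàg function near a point: right window around `t` where `x` is
close to `x t`, left window where `x` is close to the left limit `L`. -/
private lemma loc_ctrl {a b : ℝ} {x : ℝ → ℝ} (hx : CadlagOn a b x) {t : ℝ}
    (ht : t ∈ Set.Icc a b) {ε : ℝ} (hε : 0 < ε) :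
    ∃ τ > 0, ∃ L : ℝ,
      (∀ s ∈ Set.Icc a b, t ≤ s → s < t + τ → |x s - x t| ≤ ε) ∧
      (∀ s ∈ Set.Icc a b, t - τ < s → s < t → |x s - L| ≤ ε) ∧
      (a < t → Tendsto x (nhdsWithin t (Set.Iio t)) (nhds L)) := by
  have hR : ∃ τ > 0, ∀ s ∈ Set.Icc a b, t ≤ s → s < t + τ → |x s - x t| ≤ ε := by
    rcases eq_or_lt_of_le ht.2 with hb | hb
    · refine ⟨1, one_pos, fun s hs h1 h2 => ?_⟩
      have : s = t := le_antisymm (by rw [hb]; exact hs.2) h1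
      simp [this, hε.le]
    · have h := hx.1 t ⟨ht.1, hb⟩
      rw [Metric.tendsto_nhdsWithin_nhds] at h
      obtain ⟨τ, hτ, h⟩ := h ε hε
      refine ⟨τ, hτ, fun s hs h1 h2 => ?_⟩
      rcases eq_or_lt_of_le h1 with rfl | h1'
      · simp [hε.le]
      · have := h (show s ∈ Set.Ioi t from h1') (by rw [Real.dist_eq, abs_lt]; constructor <;> linarith)
        rw [Real.dist_eq] at this; exact this.le
  have hL : ∃ τ > 0, ∃ L : ℝ,
      (∀ s ∈ Set.Icc a b, t - τ < s → s < t → |x s - L| ≤ ε) ∧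
      (a < t → Tendsto x (nhdsWithin t (Set.Iio t)) (nhds L)) := by
    rcases eq_or_lt_of_le ht.1 with ha | ha
    · exact ⟨1, one_pos, 0, fun s hs h1 h2 => absurd h2 (by rw [← ha]; exact not_lt.2 hs.1),
        fun h => absurd h (by rw [← ha]; exact lt_irrefl a)⟩
    · obtain ⟨L, hLt⟩ := hx.2 t ⟨ha, ht.2⟩
      have hLt' := hLt
      rw [Metric.tendsto_nhdsWithin_nhds] at hLt'
      obtain ⟨τ, hτ, h⟩ := hLt' ε hε
      refine ⟨τ, hτ, L, fun s hs h1 h2 => ?_, fun _ => hLt⟩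
      have := h (show s ∈ Set.Iio t from h2) (by rw [Real.dist_eq, abs_lt]; constructor <;> linarith)
      rw [Real.dist_eq] at this; exact this.le
  obtain ⟨τ1, hτ1, hR⟩ := hR
  obtain ⟨τ2, hτ2, L, hL1, hL2⟩ := hL
  refine ⟨min τ1 τ2, lt_min hτ1 hτ2, L, fun s hs h1 h2 => ?_, fun s hs h1 h2 => ?_, hL2⟩
  · exact hR s hs h1 (h2.trans_le (by linarith [min_le_left τ1 τ2]))
  · exact hL1 s hs (lt_of_le_of_lt (by linarith [min_le_right τ1 τ2]) h1) h2

/-- A càdlàg function on `[a,b]` is bounded there. -/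
private lemma cadlag_bddOn {a b : ℝ} {x : ℝ → ℝ} (hx : CadlagOn a b x) :
    ∃ M : ℝ, ∀ t ∈ Set.Icc a b, |x t| ≤ M := by
  rcases le_or_gt a b with hab | hab
  swap
  · exact ⟨0, fun t ht => absurd (ht.1.trans ht.2) (not_le.2 hab)⟩
  have key : ∀ t ∈ Set.Icc a b, ∃ τ > 0, ∃ M : ℝ,
      ∀ s ∈ Metric.ball t τ ∩ Set.Icc a b, |x s| ≤ M := by
    intro t ht
    obtain ⟨τ, hτ, L, h1, h2, _⟩ := loc_ctrl hx ht one_pos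
    refine ⟨τ, hτ, max (|x t| + 1) (|L| + 1), fun s hs => ?_⟩
    have hd : |s - t| < τ := by
      have := hs.1; rwa [Metric.mem_ball, Real.dist_eq] at this
    rw [abs_lt] at hd
    rcases le_or_gt t s with h | h
    · have h3 := h1 s hs.2 h (by linarith)
      have h4 := abs_sub_abs_le_abs_sub (x s) (x t)
      have h5 := le_max_left (|x t| + 1) (|L| + 1)
      linarith
    · have h3 := h2 s hs.2 (by linarith) h
      have h4 := abs_sub_abs_le_abs_sub (x s) L
      have h5 := le_max_right (|x t| + 1) (|L| + 1)
      rw [abs_le] at h3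
      have h6 := abs_sub_abs_le_abs_sub (x s) L
      have h7 : |x s| ≤ |L| + 1 := by
        have := abs_sub (x s) L
        have h8 : |x s - L| ≤ 1 := by rw [abs_le]; exact h3
        have h9 := abs_sub_abs_le_abs_sub (x s) L
        linarith
      linarith
  choose! τ hτ M hM using key
  obtain ⟨T, hT, hcov⟩ := isCompact_Icc.elim_nhds_subcover (fun t => Metric.ball t (τ t))
    (fun t ht => Metric.ball_mem_nhds t (hτ t ht))
  rcases Finset.eq_empty_or_nonempty T with rfl | hTne
  · refine ⟨0, fun t ht => ?_⟩
    exfalso; have := hcov ht; simpa using this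
  refine ⟨T.sup' hTne M, fun s hs => ?_⟩
  obtain ⟨t, htT, hst⟩ := Set.mem_iUnion₂.1 (hcov hs)
  exact le_trans (hM t (hT t htT) s ⟨hst, hs⟩) (Finset.le_sup' M htT)
/-- Uniform oscillation control: away from jumps of size `≥ η`, nearby values differ
by at most `3 η`. -/
private lemma osc_ctrl {a b : ℝ} {x : ℝ → ℝ} (hx : CadlagOn a b x) {η : ℝ} (hη : 0 < η) :
    ∃ δ > 0, ∀ u v : ℝ, u ∈ Set.Icc a b → v ∈ Set.Icc a b → u ≤ v → v - u ≤ δ →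
      (∀ q, u < q → q ≤ v → |x q - Function.leftLim x q| < η) →
      |x v - x u| ≤ 3 * η := by
  have key : ∀ t : Set.Icc a b, ∃ τ > 0, ∃ L : ℝ,
      (∀ s ∈ Set.Icc a b, (t : ℝ) ≤ s → s < t + τ → |x s - x t| ≤ η) ∧
      (∀ s ∈ Set.Icc a b, (t : ℝ) - τ < s → s < t → |x s - L| ≤ η) ∧
      (a < t → Tendsto x (nhdsWithin (t : ℝ) (Set.Iio t)) (nhds L)) :=
    fun t => loc_ctrl hx t.2 hη
  choose τ hτ L h1 h2 h3 using key
  obtain ⟨δ, hδ, hball⟩ := lebesgue_number_lemma_of_metric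
    (c := fun i : Set.Icc a b => Metric.ball (i : ℝ) (τ i)) isCompact_Icc
    (fun i => Metric.isOpen_ball)
    (fun s hs => Set.mem_iUnion.2 ⟨⟨s, hs⟩, Metric.mem_ball_self (hτ _)⟩)
  refine ⟨δ / 2, by linarith, fun u v hu hv huv hsmall hjump => ?_⟩
  obtain ⟨t, hball'⟩ := hball u hu
  have hut : |u - (t : ℝ)| < τ t := by
    have := hball' (Metric.mem_ball_self hδ)
    rwa [Metric.mem_ball, Real.dist_eq] at this
  have hvt : |v - (t : ℝ)| < τ t := by
    have hv' : v ∈ Metric.ball u δ := by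
      rw [Metric.mem_ball, Real.dist_eq, abs_lt]; constructor <;> linarith
    have := hball' hv'
    rwa [Metric.mem_ball, Real.dist_eq] at this
  rw [abs_lt] at hut hvt
  rcases le_or_gt (t : ℝ) u with h | h
  · have hv1 := h1 t v hv (h.trans huv) (by linarith)
    have hu1 := h1 t u hu h (by linarith)
    have e := abs_sub_le (x v) (x (t : ℝ)) (x u)
    rw [abs_sub_comm (x (t : ℝ)) (x u)] at e
    linarith
  · rcases le_or_gt (t : ℝ) v with h' | h'
    · have hv1 := h1 t v hv h' (by linarith)
      have hu2 := h2 t u hu (by linarith) h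
      have hat : a < (t : ℝ) := lt_of_le_of_lt hu.1 h
      have hll : Function.leftLim x (t : ℝ) = L t :=
        leftLim_eq_of_tendsto (h3 t hat)
      have hjt := hjump t h h'
      rw [hll] at hjt
      have e1 := abs_sub_le (x v) (x (t : ℝ)) (x u)
      have e2 := abs_sub_le (x (t : ℝ)) (L t) (x u)
      rw [abs_sub_comm (L t) (x u)] at e2
      linarith
    · have hv2 := h2 t v hv (by linarith) h'
      have hu2 := h2 t u hu (by linarith) h
      have e := abs_sub_le (x v) (L t) (x u)
      rw [abs_sub_comm (L t) (x u)] at e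
      linarith

/-- A càdlàg function has only finitely many jumps of size at least `η`. -/
private lemma fin_jumps {a b : ℝ} {x : ℝ → ℝ} (hx : CadlagOn a b x) {η : ℝ} (hη : 0 < η) :
    {q | q ∈ Set.Ioc a b ∧ η ≤ |x q - Function.leftLim x q|}.Finite := by
  have hη3 : (0 : ℝ) < η / 3 := by linarith
  have key : ∀ t ∈ Set.Icc a b, ∃ τ > 0, ∃ L : ℝ,
      (∀ s ∈ Set.Icc a b, t ≤ s → s < t + τ → |x s - x t| ≤ η / 3) ∧
      (∀ s ∈ Set.Icc a b, t - τ < s → s < t → |x s - L| ≤ η / 3) ∧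
      (a < t → Tendsto x (nhdsWithin t (Set.Iio t)) (nhds L)) :=
    fun t ht => loc_ctrl hx ht hη3
  choose! τ hτ L h1 h2 h3 using key
  obtain ⟨T, hT, hcov⟩ := isCompact_Icc.elim_nhds_subcover (fun t => Metric.ball t (τ t))
    (fun t ht => Metric.ball_mem_nhds t (hτ t ht))
  refine Set.Finite.subset T.finite_toSet fun q hq => ?_
  obtain ⟨hqI, hqbig⟩ := hq
  have hqIcc : q ∈ Set.Icc a b := ⟨hqI.1.le, hqI.2⟩
  obtain ⟨t, htT, hqt⟩ := Set.mem_iUnion₂.1 (hcov hqIcc)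
  have htI := hT t htT
  rw [Metric.mem_ball, Real.dist_eq, abs_lt] at hqt
  suffices h : q = t by rw [h]; exact htT
  by_contra hne
  obtain ⟨Lq, hLq⟩ := hx.2 q hqI
  have hll : Function.leftLim x q = Lq :=
    leftLim_eq_of_tendsto hLq
  rw [hll] at hqbig
  rcases lt_or_gt_of_ne hne with hlt | hgt
  · -- q < t : left window
    have hq1 : |x q - L t| ≤ η / 3 := h2 t htI q hqIcc (by linarith) hlt
    have hq2 : |Lq - L t| ≤ η / 3 := by
      refine le_of_tendsto ((hLq.sub_const (L t)).abs) ?_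
      filter_upwards [Ioo_mem_nhdsLT_of_mem
        (⟨max_lt (by linarith) hqI.1, le_refl q⟩ : q ∈ Set.Ioc (max (t - τ t) a) q)]
        with s hs
      exact h2 t htI s ⟨(le_max_right (t - τ t) a).trans hs.1.le, hs.2.le.trans hqI.2⟩
        (lt_of_le_of_lt (le_max_left (t - τ t) a) hs.1) (hs.2.trans hlt)
    have := abs_sub_le (x q) (L t) Lq
    rw [abs_sub_comm (L t) Lq] at this
    linarith
  · -- t < q : right window
    have hq1 : |x q - x t| ≤ η / 3 := h1 t htI q hqIcc hgt.le (by linarith)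
    have hq2 : |Lq - x t| ≤ η / 3 := by
      refine le_of_tendsto ((hLq.sub_const (x t)).abs) ?_
      filter_upwards [Ioo_mem_nhdsLT_of_mem (⟨hgt, le_refl q⟩ : q ∈ Set.Ioc t q)] with s hs
      exact h1 t htI s ⟨htI.1.trans hs.1.le, hs.2.le.trans hqI.2⟩ hs.1.le (by linarith [hs.2])
    have := abs_sub_le (x q) (x t) Lq
    rw [abs_sub_comm (x t) Lq] at this
    linarith

/-- A genuine jump point is a discontinuity point. -/
private lemma jump_mem_disc {a b : ℝ} {x : ℝ → ℝ} (hx : CadlagOn a b x) {q : ℝ}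
    (hq : q ∈ Set.Ioc a b) (hne : x q ≠ Function.leftLim x q) : q ∈ DiscOn a b x := by
  refine ⟨⟨hq.1.le, hq.2⟩, fun hc => hne ?_⟩
  obtain ⟨Lq, hLq⟩ := hx.2 q hq
  have hll : Function.leftLim x q = Lq :=
    leftLim_eq_of_tendsto hLq
  rw [hll]
  have h1 : Tendsto x (nhdsWithin q (Set.Ioo a q)) (nhds (x q)) :=
    hc.tendsto.mono_left (nhdsWithin_mono q fun s hs => ⟨hs.1.le, hs.2.le.trans hq.2⟩)
  have h2 : Tendsto x (nhdsWithin q (Set.Ioo a q)) (nhds Lq) :=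
    hLq.mono_left (nhdsWithin_mono q Set.Ioo_subset_Iio_self)
  haveI : (nhdsWithin q (Set.Ioo a q)).NeBot := by
    rw [nhdsWithin_Ioo_eq_nhdsLT hq.1]; infer_instance
  exact tendsto_nhds_unique h1 h2
/-- Piecewise linear interpolation through a list of nodes. -/
private noncomputable def plF : List (ℝ × ℝ) → ℝ → ℝ
  | [], t => t
  | [p], t => t - p.1 + p.2
  | p :: q :: r, t => if t ≤ q.1 then p.2 + (t - p.1) * (q.2 - p.2) / (q.1 - p.1)
      else plF (q :: r) t

/-- Node order relation. -/
private def Rnode (p q : ℝ × ℝ) : Prop := p.1 < q.1 ∧ p.2 < q.2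

private lemma plF_node : ∀ (L : List (ℝ × ℝ)), L.Pairwise Rnode → ∀ p ∈ L, plF L p.1 = p.2
  | [], _, p, hp => by simp at hp
  | [p0], _, p, hp => by
      simp only [List.mem_singleton] at hp; subst hp; simp [plF]
  | p0 :: q0 :: r, hpw, p, hp => by
      have hq : Rnode p0 q0 := (List.pairwise_cons.1 hpw).1 q0 (by simp)
      have hd : q0.1 - p0.1 ≠ 0 := by have := hq.1; intro h; rw [sub_eq_zero] at h; linarith
      rcases List.mem_cons.1 hp with rfl | hp'
      · simp only [plF, if_pos hq.1.le]
        simp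
      · rcases List.mem_cons.1 hp' with rfl | hp''
        · simp only [plF, if_pos (le_refl p.1)]
          field_simp
          ring
        · have hlt : q0.1 < p.1 := by
            have hpw' := (List.pairwise_cons.1 (List.pairwise_cons.1 hpw).2).1 p hp''
            exact hpw'.1
          simp only [plF, if_neg (not_le.2 hlt)]
          exact plF_node (q0 :: r) (List.pairwise_cons.1 hpw).2 p hp'

private lemma plF_mono : ∀ (L : List (ℝ × ℝ)), L.Pairwise Rnode → StrictMono (plF L)
  | [], _ => fun s t hst => by simpa [plF] using hst
  | [p], _ => fun s t hst => by simp only [plF]; linarith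
  | p :: q :: r, hpw => by
      have hq : Rnode p q := (List.pairwise_cons.1 hpw).1 q (by simp)
      have hd : 0 < q.1 - p.1 := by linarith [hq.1]
      have hn : 0 < q.2 - p.2 := by linarith [hq.2]
      have ihm := plF_mono (q :: r) (List.pairwise_cons.1 hpw).2
      have hnode : plF (q :: r) q.1 = q.2 :=
        plF_node (q :: r) (List.pairwise_cons.1 hpw).2 q (by simp)
      intro s t hst
      simp only [plF]
      by_cases hs : s ≤ q.1 <;> by_cases ht : t ≤ q.1
      · rw [if_pos hs, if_pos ht]
        have : (s - p.1) * (q.2 - p.2) / (q.1 - p.1) < (t - p.1) * (q.2 - p.2) / (q.1 - p.1) :=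
          (div_lt_div_iff_of_pos_right hd).2 (mul_lt_mul_of_pos_right (by linarith) hn)
        linarith
      · rw [if_pos hs, if_neg ht]
        have h1 : p.2 + (s - p.1) * (q.2 - p.2) / (q.1 - p.1) ≤ q.2 := by
          have : (s - p.1) * (q.2 - p.2) / (q.1 - p.1) ≤ q.2 - p.2 := by
            rw [div_le_iff₀ hd]; nlinarith
          linarith
        have h2 : q.2 < plF (q :: r) t := by
          rw [← hnode]; exact ihm (not_le.1 ht)
        linarith
      · exact absurd (hst.le.trans ht) hs
      · rw [if_neg hs, if_neg ht]; exact ihm hst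

private lemma plF_cont : ∀ (L : List (ℝ × ℝ)), L.Pairwise Rnode → Continuous (plF L)
  | [], _ => continuous_id.congr (fun t => by simp [plF])
  | [p], _ => by
      simp only [plF]; fun_prop
  | p :: q :: r, hpw => by
      have hq : Rnode p q := (List.pairwise_cons.1 hpw).1 q (by simp)
      have hd : q.1 - p.1 ≠ 0 := by have := hq.1; intro h; linarith [sub_eq_zero.1 h]
      have ih := plF_cont (q :: r) (List.pairwise_cons.1 hpw).2
      have hnode : plF (q :: r) q.1 = q.2 :=
        plF_node (q :: r) (List.pairwise_cons.1 hpw).2 q (by simp)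
      simp only [plF]
      apply Continuous.if_le
      · fun_prop
      · exact ih
      · exact continuous_id
      · exact continuous_const
      · intro t ht
        rw [ht, hnode]
        field_simp
        ring
private lemma plF_dist : ∀ (p₀ : ℝ × ℝ) (L : List (ℝ × ℝ)), (p₀ :: L).Pairwise Rnode →
    ∀ c : ℝ, (∀ p ∈ p₀ :: L, |p.2 - p.1| ≤ c) → ∀ t : ℝ, p₀.1 ≤ t →
    |plF (p₀ :: L) t - t| ≤ c
  | p₀, [], _, c, hc, t, ht => by
      have : plF [p₀] t - t = p₀.2 - p₀.1 := by simp [plF]; ring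
      rw [this]; exact hc p₀ (by simp)
  | p₀, q :: r, hpw, c, hc, t, ht => by
      have hq : Rnode p₀ q := (List.pairwise_cons.1 hpw).1 q (by simp)
      have hd : 0 < q.1 - p₀.1 := by linarith [hq.1]
      by_cases hts : t ≤ q.1
      · simp only [plF, if_pos hts]
        have h1 : |p₀.2 - p₀.1| ≤ c := hc p₀ (by simp)
        have h2 : |q.2 - q.1| ≤ c := hc q (by simp)
        rw [abs_le] at h1 h2 ⊢
        have key : (q.1 - p₀.1) * (p₀.2 + (t - p₀.1) * (q.2 - p₀.2) / (q.1 - p₀.1) - t)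
            = (q.1 - t) * (p₀.2 - p₀.1) + (t - p₀.1) * (q.2 - q.1) := by
          field_simp
          ring
        constructor
        · have up : (q.1 - p₀.1) * (-c) ≤ (q.1 - p₀.1) *
              (p₀.2 + (t - p₀.1) * (q.2 - p₀.2) / (q.1 - p₀.1) - t) := by
            rw [key]; nlinarith
          exact (mul_le_mul_iff_right₀ hd).1 up
        · have up : (q.1 - p₀.1) * (p₀.2 + (t - p₀.1) * (q.2 - p₀.2) / (q.1 - p₀.1) - t)
              ≤ (q.1 - p₀.1) * c := by
            rw [key]; nlinarith
          exact (mul_le_mul_iff_right₀ hd).1 up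
      · simp only [plF, if_neg hts]
        exact plF_dist q r (List.pairwise_cons.1 hpw).2 c
          (fun p hp => hc p (List.mem_cons_of_mem _ hp)) t (not_le.1 hts).le
private lemma J1dist_le {a b : ℝ} {u v : ℝ → ℝ} {r : ℝ} (h0 : 0 ≤ r)
    (hl : ∃ l, TimeChange a b l ∧ ∀ t ∈ Set.Icc a b, |l t - t| ≤ r ∧ |u t - v (l t)| ≤ r) :
    J1dist a b u v ≤ r :=
  csInf_le ⟨0, fun _ hs => hs.1⟩ ⟨h0, hl⟩

private lemma J1dist_nonneg {a b : ℝ} {u v : ℝ → ℝ} : 0 ≤ J1dist a b u v :=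
  Real.sInf_nonneg fun _ hs => hs.1

private lemma id_timeChange {a b : ℝ} : TimeChange a b id :=
  ⟨continuousOn_id, fun s _ t _ hst => hst, rfl, rfl, fun t ht => ht⟩

private lemma J1dist_extract {a b : ℝ} {u v : ℝ → ℝ}
    (hu : ∃ M, ∀ t ∈ Set.Icc a b, |u t| ≤ M) (hv : ∃ M, ∀ t ∈ Set.Icc a b, |v t| ≤ M)
    {δ : ℝ} (h : J1dist a b u v < δ) :
    ∃ l, TimeChange a b l ∧ ∀ t ∈ Set.Icc a b, |l t - t| ≤ δ ∧ |u t - v (l t)| ≤ δ := by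
  obtain ⟨Mu, hMu⟩ := hu
  obtain ⟨Mv, hMv⟩ := hv
  have hne : Set.Nonempty { r : ℝ | 0 ≤ r ∧ ∃ l : ℝ → ℝ, TimeChange a b l ∧
      ∀ t ∈ Set.Icc a b, |l t - t| ≤ r ∧ |u t - v (l t)| ≤ r } := by
    refine ⟨max 0 (Mu + Mv), le_max_left _ _, id, id_timeChange, fun t ht => ⟨by simp, ?_⟩⟩
    have h1 := hMu t ht
    have h2 := hMv t ht
    have h3 := abs_sub (u t) (v t)
    simp only [id_eq]
    calc |u t - v t| ≤ Mu + Mv := by linarith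
      _ ≤ max 0 (Mu + Mv) := le_max_right _ _
  obtain ⟨r, hr, hrδ⟩ := (csInf_lt_iff ⟨0, fun _ hs => hs.1⟩ hne).1 h
  obtain ⟨_, l, hl, hcond⟩ := hr
  exact ⟨l, hl, fun t ht => ⟨(hcond t ht).1.trans hrδ.le, (hcond t ht).2.trans hrδ.le⟩⟩

private lemma tc_surj {a b : ℝ} (hab : a ≤ b) {l : ℝ → ℝ} (hl : TimeChange a b l) :
    ∀ q ∈ Set.Icc a b, ∃ s, s ∈ Set.Icc a b ∧ l s = q := by
  intro q hq
  have h := intermediate_value_Icc hab hl.1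
  rw [hl.2.2.1, hl.2.2.2.1] at h
  obtain ⟨s, hs, hls⟩ := h hq
  exact ⟨s, hs, hls⟩
/-- Continuity of addition in the `J_1` topology at pairs of càdlàg functions with disjoint
sets of discontinuities (Whitt 1980, Theorem 4.1). -/
theorem stmt9 (a b : ℝ) (hab : a < b) (x y : ℝ → ℝ) (xs ys : ℕ → ℝ → ℝ)
    (hx : CadlagOn a b x) (hy : CadlagOn a b y)
    (hxs : ∀ n, CadlagOn a b (xs n)) (hys : ∀ n, CadlagOn a b (ys n))
    (hconvx : Tendsto (fun n => J1dist a b (xs n) x) atTop (nhds 0))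
    (hconvy : Tendsto (fun n => J1dist a b (ys n) y) atTop (nhds 0))
    (hdisj : DiscOn a b x ∩ DiscOn a b y = ∅) :
    Tendsto (fun n => J1dist a b (fun t => xs n t + ys n t) (fun t => x t + y t))
      atTop (nhds 0) := by
  classical
  rw [Metric.tendsto_atTop]
  intro ε hε
  set η : ℝ := ε / 12 with hηdef
  have hη : 0 < η := by positivity
  obtain ⟨δx, hδx, hoscx⟩ := osc_ctrl hx hη
  obtain ⟨δy, hδy, hoscy⟩ := osc_ctrl hy hη
  set Jx : Set ℝ := {q | q ∈ Set.Ioc a b ∧ η ≤ |x q - Function.leftLim x q|} with hJxdef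
  set Jy : Set ℝ := {q | q ∈ Set.Ioc a b ∧ η ≤ |y q - Function.leftLim y q|} with hJydef
  have hfinx : Jx.Finite := fin_jumps hx hη
  have hfiny : Jy.Finite := fin_jumps hy hη
  have hJxy : ∀ q, q ∈ Jx → q ∉ Jy := by
    intro q hqx hqy
    have h1 : q ∈ DiscOn a b x := by
      refine jump_mem_disc hx hqx.1 fun h => ?_
      have h2 := hqx.2
      rw [h, sub_self, abs_zero] at h2
      exact absurd h2 (not_le.2 hη)
    have h2 : q ∈ DiscOn a b y := by
      refine jump_mem_disc hy hqy.1 fun h => ?_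
      have h2 := hqy.2
      rw [h, sub_self, abs_zero] at h2
      exact absurd h2 (not_le.2 hη)
    exact Set.eq_empty_iff_forall_notMem.1 hdisj q ⟨h1, h2⟩
  set Jfin : Finset ℝ := (hfinx.union hfiny).toFinset.filter (fun q => q < b) with hJfindef
  have hJfin_mem : ∀ q, q ∈ Jfin ↔ (q ∈ Jx ∪ Jy) ∧ q < b := by
    intro q
    rw [hJfindef, Finset.mem_filter, Set.Finite.mem_toFinset]
  have hJfin_Ioc : ∀ q ∈ Jfin, q ∈ Set.Ioc a b ∧ q < b := by
    intro q hq
    obtain ⟨hmem, hlt⟩ := (hJfin_mem q).1 hq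
    rcases hmem with h | h
    · exact ⟨h.1, hlt⟩
    · exact ⟨h.1, hlt⟩
  -- minimal gap between big jump points
  set G : Finset ℝ := ((Jfin ×ˢ Jfin).filter fun p => p.1 < p.2).image (fun p => p.2 - p.1)
    with hGdef
  set ρ : ℝ := if hGne : G.Nonempty then G.min' hGne else 1 with hρdef
  have hρpos : 0 < ρ := by
    rw [hρdef]
    split_ifs with hGne
    · have hmem := G.min'_mem hGne
      obtain ⟨p, hp, hval⟩ := Finset.mem_image.1 hmem
      rw [Finset.mem_filter] at hp
      rw [← hval]; linarith [hp.2]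
    · exact one_pos
  have hρgap : ∀ q ∈ Jfin, ∀ q' ∈ Jfin, q < q' → ρ ≤ q' - q := by
    intro q hq q' hq' hlt
    have hmem : q' - q ∈ G := by
      rw [hGdef, Finset.mem_image]
      exact ⟨(q, q'), Finset.mem_filter.2 ⟨Finset.mem_product.2 ⟨hq, hq'⟩, hlt⟩, rfl⟩
    rw [hρdef, dif_pos ⟨_, hmem⟩]
    exact G.min'_le _ hmem
  set δ : ℝ := min (min (ε / 8) (ρ / 4)) (min (δx / 2) (δy / 2)) with hδdef
  have hδ1 : δ ≤ ε / 8 := le_trans (min_le_left _ _) (min_le_left _ _)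
  have hδ2 : δ ≤ ρ / 4 := le_trans (min_le_left _ _) (min_le_right _ _)
  have hδ3 : δ ≤ δx / 2 := le_trans (min_le_right _ _) (min_le_left _ _)
  have hδ4 : δ ≤ δy / 2 := le_trans (min_le_right _ _) (min_le_right _ _)
  have hδpos : 0 < δ := by
    apply lt_min (lt_min (by linarith) (by linarith)) (lt_min (by linarith) (by linarith))
  have hxb := cadlag_bddOn hx
  have hyb := cadlag_bddOn hy
  obtain ⟨N1, hN1⟩ := Metric.tendsto_atTop.1 hconvx δ hδpos
  obtain ⟨N2, hN2⟩ := Metric.tendsto_atTop.1 hconvy δ hδpos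
  refine ⟨max N1 N2, fun n hn => ?_⟩
  have hnx : J1dist a b (xs n) x < δ := by
    have := hN1 n (le_trans (le_max_left _ _) hn)
    rw [Real.dist_eq, sub_zero] at this
    exact lt_of_le_of_lt (le_abs_self _) this
  have hny : J1dist a b (ys n) y < δ := by
    have := hN2 n (le_trans (le_max_right _ _) hn)
    rw [Real.dist_eq, sub_zero] at this
    exact lt_of_le_of_lt (le_abs_self _) this
  obtain ⟨lx, hlx, hlxc⟩ := J1dist_extract (cadlag_bddOn (hxs n)) hxb hnx
  obtain ⟨ly, hly, hlyc⟩ := J1dist_extract (cadlag_bddOn (hys n)) hyb hny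
  -- choose preimages of the big jump points
  have hσx := tc_surj hab.le hlx
  have hσy := tc_surj hab.le hly
  set σ : ℝ → ℝ := fun q =>
    if hq : q ∈ Set.Icc a b then
      (if q ∈ Jx then Classical.choose (hσx q hq) else Classical.choose (hσy q hq))
    else q with hσdef
  have hσspec : ∀ q ∈ Jfin, σ q ∈ Set.Icc a b ∧
      ((q ∈ Jx → lx (σ q) = q) ∧ (q ∉ Jx → ly (σ q) = q)) := by
    intro q hq
    have hqI : q ∈ Set.Icc a b := Set.Ioc_subset_Icc_self (hJfin_Ioc q hq).1
    rw [hσdef]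
    simp only [dif_pos hqI]
    by_cases hqx : q ∈ Jx
    · rw [if_pos hqx]
      obtain ⟨h1, h2⟩ := Classical.choose_spec (hσx q hqI)
      exact ⟨h1, fun _ => h2, fun h => absurd hqx h⟩
    · rw [if_neg hqx]
      obtain ⟨h1, h2⟩ := Classical.choose_spec (hσy q hqI)
      exact ⟨h1, fun h => absurd h hqx, fun _ => h2⟩
  have hσnear : ∀ q ∈ Jfin, |σ q - q| ≤ δ := by
    intro q hq
    obtain ⟨hqI, hqx, hqy⟩ := hσspec q hq
    by_cases h : q ∈ Jx
    · have := (hlxc (σ q) hqI).1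
      rw [hqx h] at this
      rwa [abs_sub_comm]
    · have := (hlyc (σ q) hqI).1
      rw [hqy h] at this
      rwa [abs_sub_comm]
  have hσmem : ∀ q ∈ Jfin, a < σ q ∧ σ q < b := by
    intro q hq
    obtain ⟨hqI, hqx, hqy⟩ := hσspec q hq
    obtain ⟨hqIoc, hqb⟩ := hJfin_Ioc q hq
    by_cases h : q ∈ Jx
    · constructor
      · have : lx a < lx (σ q) := by rw [hlx.2.2.1, hqx h]; exact hqIoc.1
        exact (hlx.2.1.lt_iff_lt (Set.left_mem_Icc.2 hab.le) hqI).1 this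
      · have : lx (σ q) < lx b := by rw [hlx.2.2.2.1, hqx h]; exact hqb
        exact (hlx.2.1.lt_iff_lt hqI (Set.right_mem_Icc.2 hab.le)).1 this
    · constructor
      · have : ly a < ly (σ q) := by rw [hly.2.2.1, hqy h]; exact hqIoc.1
        exact (hly.2.1.lt_iff_lt (Set.left_mem_Icc.2 hab.le) hqI).1 this
      · have : ly (σ q) < ly b := by rw [hly.2.2.2.1, hqy h]; exact hqb
        exact (hly.2.1.lt_iff_lt hqI (Set.right_mem_Icc.2 hab.le)).1 this
  -- the node list
  set qs : List ℝ := Jfin.sort (· ≤ ·) with hqsdef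
  have hmemqs : ∀ q ∈ qs, q ∈ Jfin := fun q hq => (Finset.mem_sort _).1 hq
  set L : List (ℝ × ℝ) := (a, a) :: ((qs.map fun q => (σ q, q)) ++ [(b, b)]) with hLdef
  have hpwqs : qs.Pairwise (· < ·) := (Finset.sortedLT_sort Jfin).pairwise
  have hσlt : ∀ q ∈ Jfin, ∀ q' ∈ Jfin, q < q' → σ q < σ q' := by
    intro q hq q' hq' hlt
    have h1 := hρgap q hq q' hq' hlt
    have h2 := hσnear q hq
    have h3 := hσnear q' hq'
    rw [abs_le] at h2 h3
    linarith
  have hpwM : (qs.map fun q => (σ q, q)).Pairwise Rnode := by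
    rw [List.pairwise_map]
    refine List.Pairwise.imp_of_mem ?_ hpwqs
    intro q q' hq hq' hlt
    exact ⟨hσlt q (hmemqs q hq) q' (hmemqs q' hq') hlt, hlt⟩
  have hpwL : L.Pairwise Rnode := by
    rw [hLdef]
    refine List.pairwise_cons.2 ⟨?_, ?_⟩
    · intro p hp
      rcases List.mem_append.1 hp with hp | hp
      · obtain ⟨q, hq, rfl⟩ := List.mem_map.1 hp
        exact ⟨(hσmem q (hmemqs q hq)).1, (hJfin_Ioc q (hmemqs q hq)).1.1⟩
      · rw [List.mem_singleton] at hp; subst hp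
        exact ⟨hab, hab⟩
    · refine List.pairwise_append.2 ⟨hpwM, List.pairwise_singleton _ _, ?_⟩
      intro p hp p' hp'
      rw [List.mem_singleton] at hp'; subst hp'
      obtain ⟨q, hq, rfl⟩ := List.mem_map.1 hp
      exact ⟨(hσmem q (hmemqs q hq)).2, (hJfin_Ioc q (hmemqs q hq)).2⟩
  set l : ℝ → ℝ := plF L with hldef
  have hla : l a = a := plF_node L hpwL (a, a) (by rw [hLdef]; simp)
  have hlb : l b = b := plF_node L hpwL (b, b) (by rw [hLdef]; simp)
  have hlmono : StrictMono l := plF_mono L hpwL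
  have htc : TimeChange a b l := by
    refine ⟨(plF_cont L hpwL).continuousOn, hlmono.strictMonoOn _, hla, hlb, fun t ht => ?_⟩
    constructor
    · rw [← hla]; exact hlmono.monotone ht.1
    · rw [← hlb]; exact hlmono.monotone ht.2
  have hlnear : ∀ t ∈ Set.Icc a b, |l t - t| ≤ δ := by
    intro t ht
    refine plF_dist (a, a) _ (by rw [hLdef] at hpwL; exact hpwL) δ ?_ t ht.1
    intro p hp
    rcases List.mem_cons.1 hp with rfl | hp'
    · simpa using hδpos.le
    rcases List.mem_append.1 hp' with hp'' | hp''
    · obtain ⟨q, hq, rfl⟩ := List.mem_map.1 hp''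
      have := hσnear q (hmemqs q hq)
      rwa [abs_sub_comm] at this
    · rw [List.mem_singleton] at hp''; subst hp''
      simpa using hδpos.le
  -- node property
  have hnodex : ∀ q ∈ Jx, ∃ s, s ∈ Set.Icc a b ∧ lx s = q ∧ l s = q := by
    intro q hqx
    rcases eq_or_lt_of_le hqx.1.2 with rfl | hqb
    · exact ⟨q, Set.right_mem_Icc.2 hab.le, hlx.2.2.2.1, hlb⟩
    · have hqf : q ∈ Jfin := (hJfin_mem q).2 ⟨Or.inl hqx, hqb⟩
      have hmem : (σ q, q) ∈ L := by
        rw [hLdef]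
        exact List.mem_cons_of_mem _ (List.mem_append_left _
          (List.mem_map.2 ⟨q, (Finset.mem_sort _).2 hqf, rfl⟩))
      exact ⟨σ q, (hσspec q hqf).1, (hσspec q hqf).2.1 hqx, plF_node L hpwL _ hmem⟩
  have hnodey : ∀ q ∈ Jy, ∃ s, s ∈ Set.Icc a b ∧ ly s = q ∧ l s = q := by
    intro q hqy
    rcases eq_or_lt_of_le hqy.1.2 with rfl | hqb
    · exact ⟨q, Set.right_mem_Icc.2 hab.le, hly.2.2.2.1, hlb⟩
    · have hqf : q ∈ Jfin := (hJfin_mem q).2 ⟨Or.inr hqy, hqb⟩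
      have hmem : (σ q, q) ∈ L := by
        rw [hLdef]
        exact List.mem_cons_of_mem _ (List.mem_append_left _
          (List.mem_map.2 ⟨q, (Finset.mem_sort _).2 hqf, rfl⟩))
      exact ⟨σ q, (hσspec q hqf).1, (hσspec q hqf).2.2 (fun h => hJxy q h hqy),
        plF_node L hpwL _ hmem⟩
  -- oscillation bounds
  have hxosc : ∀ t ∈ Set.Icc a b, |x (lx t) - x (l t)| ≤ 3 * η := by
    intro t ht
    have hlxm : lx t ∈ Set.Icc a b := hlx.2.2.2.2 ht
    have hlm : l t ∈ Set.Icc a b := htc.2.2.2.2 ht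
    have h1 : |lx t - t| ≤ δ := (hlxc t ht).1
    have h2 : |l t - t| ≤ δ := hlnear t ht
    set u : ℝ := min (lx t) (l t) with hudef
    set v : ℝ := max (lx t) (l t) with hvdef
    have hu : u ∈ Set.Icc a b := ⟨le_min hlxm.1 hlm.1, (min_le_left _ _).trans hlxm.2⟩
    have hv : v ∈ Set.Icc a b := ⟨hlxm.1.trans (le_max_left _ _), max_le hlxm.2 hlm.2⟩
    have huv : u ≤ v := min_le_max
    have habs : |lx t - t| ≤ δ ∧ |l t - t| ≤ δ := ⟨h1, h2⟩
    rw [abs_le] at h1 h2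
    have hd : v - u ≤ δx := by
      rw [hudef, hvdef]
      rcases le_total (lx t) (l t) with h | h
      · rw [min_eq_left h, max_eq_right h]; linarith
      · rw [min_eq_right h, max_eq_left h]; linarith
    have hnj : ∀ q, u < q → q ≤ v → |x q - Function.leftLim x q| < η := by
      intro q hq1 hq2
      by_contra hcon
      push_neg at hcon
      have hqJ : q ∈ Jx := ⟨⟨lt_of_le_of_lt hu.1 hq1, hq2.trans hv.2⟩, hcon⟩
      obtain ⟨s, hs, hlxs, hls⟩ := hnodex q hqJ
      rcases le_or_gt s t with hst | hst
      · have e1 : q ≤ lx t := by rw [← hlxs]; exact (hlx.2.1.monotoneOn) hs ht hst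
        have e2 : q ≤ l t := by rw [← hls]; exact hlmono.monotone hst
        have : q ≤ u := le_min e1 e2
        linarith
      · have e1 : lx t < q := by rw [← hlxs]; exact hlx.2.1 ht hs hst
        have e2 : l t < q := by rw [← hls]; exact hlmono hst
        have : v < q := max_lt e1 e2
        linarith
    have hres := hoscx u v hu hv huv hd hnj
    rcases le_total (lx t) (l t) with h | h
    · have hu' : u = lx t := min_eq_left h
      have hv' : v = l t := max_eq_right h
      rw [hu', hv'] at hres
      rwa [abs_sub_comm]
    · have hu' : u = l t := min_eq_right h
      have hv' : v = lx t := max_eq_left h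
      rw [hu', hv'] at hres
      exact hres
  have hyosc : ∀ t ∈ Set.Icc a b, |y (ly t) - y (l t)| ≤ 3 * η := by
    intro t ht
    have hlym : ly t ∈ Set.Icc a b := hly.2.2.2.2 ht
    have hlm : l t ∈ Set.Icc a b := htc.2.2.2.2 ht
    have h1 : |ly t - t| ≤ δ := (hlyc t ht).1
    have h2 : |l t - t| ≤ δ := hlnear t ht
    set u : ℝ := min (ly t) (l t) with hudef
    set v : ℝ := max (ly t) (l t) with hvdef
    have hu : u ∈ Set.Icc a b := ⟨le_min hlym.1 hlm.1, (min_le_left _ _).trans hlym.2⟩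
    have hv : v ∈ Set.Icc a b := ⟨hlym.1.trans (le_max_left _ _), max_le hlym.2 hlm.2⟩
    have huv : u ≤ v := min_le_max
    rw [abs_le] at h1 h2
    have hd : v - u ≤ δy := by
      rw [hudef, hvdef]
      rcases le_total (ly t) (l t) with h | h
      · rw [min_eq_left h, max_eq_right h]; linarith
      · rw [min_eq_right h, max_eq_left h]; linarith
    have hnj : ∀ q, u < q → q ≤ v → |y q - Function.leftLim y q| < η := by
      intro q hq1 hq2
      by_contra hcon
      push_neg at hcon
      have hqJ : q ∈ Jy := ⟨⟨lt_of_le_of_lt hu.1 hq1, hq2.trans hv.2⟩, hcon⟩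
      obtain ⟨s, hs, hlys, hls⟩ := hnodey q hqJ
      rcases le_or_gt s t with hst | hst
      · have e1 : q ≤ ly t := by rw [← hlys]; exact (hly.2.1.monotoneOn) hs ht hst
        have e2 : q ≤ l t := by rw [← hls]; exact hlmono.monotone hst
        have : q ≤ u := le_min e1 e2
        linarith
      · have e1 : ly t < q := by rw [← hlys]; exact hly.2.1 ht hs hst
        have e2 : l t < q := by rw [← hls]; exact hlmono hst
        have : v < q := max_lt e1 e2
        linarith
    have hres := hoscy u v hu hv huv hd hnj
    rcases le_total (ly t) (l t) with h | h
    · have hu' : u = ly t := min_eq_left h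
      have hv' : v = l t := max_eq_right h
      rw [hu', hv'] at hres
      rwa [abs_sub_comm]
    · have hu' : u = l t := min_eq_right h
      have hv' : v = ly t := max_eq_left h
      rw [hu', hv'] at hres
      exact hres
  -- conclusion
  have hfinal : J1dist a b (fun t => xs n t + ys n t) (fun t => x t + y t) ≤ 3 * ε / 4 := by
    apply J1dist_le (by linarith)
    refine ⟨l, htc, fun t ht => ⟨?_, ?_⟩⟩
    · have := hlnear t ht; linarith
    · have e1 := (hlxc t ht).2
      have e2 := (hlyc t ht).2
      have e3 := hxosc t ht
      have e4 := hyosc t ht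
      have key : |xs n t + ys n t - (x (l t) + y (l t))|
          ≤ |xs n t - x (lx t)| + |x (lx t) - x (l t)|
            + (|ys n t - y (ly t)| + |y (ly t) - y (l t)|) := by
        have t1 := abs_add_le (xs n t - x (lx t) + (x (lx t) - x (l t)))
          (ys n t - y (ly t) + (y (ly t) - y (l t)))
        have t2 := abs_add_le (xs n t - x (lx t)) (x (lx t) - x (l t))
        have t3 := abs_add_le (ys n t - y (ly t)) (y (ly t) - y (l t))
        have heq : xs n t + ys n t - (x (l t) + y (l t))
            = xs n t - x (lx t) + (x (lx t) - x (l t))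
              + (ys n t - y (ly t) + (y (ly t) - y (l t))) := by ring
        rw [heq]
        linarith
      have : |xs n t + ys n t - (x (l t) + y (l t))| ≤ δ + 3 * η + (δ + 3 * η) := by
        linarith
      calc |xs n t + ys n t - (x (l t) + y (l t))| ≤ δ + 3 * η + (δ + 3 * η) := this
        _ ≤ 3 * ε / 4 := by rw [hηdef]; linarith
  have hnn : 0 ≤ J1dist a b (fun t => xs n t + ys n t) (fun t => x t + y t) := J1dist_nonneg
  rw [Real.dist_eq, sub_zero, abs_of_nonneg hnn]
  linarith
end

section
/- Let W, W' be independent random elements of D(I), each with distribution ν satisfying: for every t ∈ I, ν({x : t ∈ Disc(x)}) = 0. Then almost surely W and W' have no common discontinuity point, i.e. P(Disc(W) ∩ Disc(W') ≠ ∅) = 0. -/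
open MeasureTheory ProbabilityTheory Filter Set

namespace Stmt10Aux

noncomputable section




def grid (n : ℕ) (k : ℤ) : Set ℝ := Icc (((k:ℝ)-1)/2^n) (((k:ℝ)+1)/2^n)

def Aset (a b ε : ℝ) (n : ℕ) (k : ℤ) : Set (ℝ → ℝ) :=
  {y | ∃ q q' : ℚ, ((q:ℝ) ∈ Icc a b ∩ grid n k) ∧ ((q':ℝ) ∈ Icc a b ∩ grid n k) ∧
    ε ≤ |y q - y q'|}

def Cset (a b ε : ℝ) : Set ((ℝ → ℝ) × (ℝ → ℝ)) :=
  ⋂ n : ℕ, ⋃ k : ℤ, (Aset a b ε n k) ×ˢ (Aset a b ε n k)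

lemma measurableSet_Aset (a b ε : ℝ) (n : ℕ) (k : ℤ) : MeasurableSet (Aset a b ε n k) := by
  have h : Aset a b ε n k = ⋃ q : ℚ, ⋃ q' : ℚ, {y : ℝ → ℝ |
      ((q:ℝ) ∈ Icc a b ∩ grid n k) ∧ ((q':ℝ) ∈ Icc a b ∩ grid n k) ∧ ε ≤ |y q - y q'|} := by
    ext y; simp [Aset]
  rw [h]
  refine MeasurableSet.iUnion fun q => MeasurableSet.iUnion fun q' => ?_
  have hm : MeasurableSet {y : ℝ → ℝ | ε ≤ |y q - y q'|} :=
    measurableSet_le measurable_const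
      (((measurable_pi_apply ((q:ℝ))).sub (measurable_pi_apply ((q':ℝ)))).abs)
  by_cases h1 : (q:ℝ) ∈ Icc a b ∩ grid n k
  · by_cases h2 : ((q':ℚ):ℝ) ∈ Icc a b ∩ grid n k
    · simpa [h1, h2] using hm
    · simp [h2]
  · simp [h1]

lemma measurableSet_Cset (a b ε : ℝ) : MeasurableSet (Cset a b ε) :=
  MeasurableSet.iInter fun n => MeasurableSet.iUnion fun k =>
    (measurableSet_Aset a b ε n k).prod (measurableSet_Aset a b ε n k)



lemma cwa_at_a {a b : ℝ} (hab : a < b) {x : ℝ → ℝ} (hc : CadlagOn a b x) :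
    ContinuousWithinAt x (Icc a b) a := by
  have hsub : Icc a b ⊆ insert a (Ioi a) := by
    intro s hs
    rcases eq_or_lt_of_le hs.1 with h | h
    · exact Or.inl h.symm
    · exact Or.inr h
  have hle : nhdsWithin a (Icc a b) ≤ pure a ⊔ nhdsWithin a (Ioi a) := by
    rw [← nhdsWithin_insert]
    exact nhdsWithin_mono _ hsub
  exact Tendsto.mono_left (tendsto_sup.mpr ⟨tendsto_pure_nhds x a, hc.1 a ⟨le_rfl, hab⟩⟩) hle

lemma cwa_of_left {a b t : ℝ} {x : ℝ → ℝ} (hc : CadlagOn a b x) (hta : a < t) (htb : t ≤ b)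
    (hL : Tendsto x (nhdsWithin t (Iio t)) (nhds (x t))) :
    ContinuousWithinAt x (Icc a b) t := by
  rcases eq_or_lt_of_le htb with rfl | htb'
  · -- t = b
    have hsub : Icc a t ⊆ insert t (Iio t) := by
      intro s hs
      rcases eq_or_lt_of_le hs.2 with h | h
      · exact Or.inl h
      · exact Or.inr h
    have hle : nhdsWithin t (Icc a t) ≤ pure t ⊔ nhdsWithin t (Iio t) := by
      rw [← nhdsWithin_insert]; exact nhdsWithin_mono _ hsub
    exact Tendsto.mono_left (tendsto_sup.mpr ⟨tendsto_pure_nhds x t, hL⟩) hle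
  · have hsub : Icc a b ⊆ Iio t ∪ insert t (Ioi t) := by
      intro s _
      rcases lt_trichotomy s t with h | h | h
      · exact Or.inl h
      · exact Or.inr (Or.inl h)
      · exact Or.inr (Or.inr h)
    have hle : nhdsWithin t (Icc a b) ≤
        nhdsWithin t (Iio t) ⊔ (pure t ⊔ nhdsWithin t (Ioi t)) := by
      rw [← nhdsWithin_insert, ← nhdsWithin_union]
      exact nhdsWithin_mono _ hsub
    exact Tendsto.mono_left (tendsto_sup.mpr ⟨hL, tendsto_sup.mpr
      ⟨tendsto_pure_nhds x t, hc.1 t ⟨hta.le, htb'⟩⟩⟩) hle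

lemma jump_exists {a b t : ℝ} {x : ℝ → ℝ} (hc : CadlagOn a b x) (hta : a < t) (htb : t ≤ b)
    (hd : ¬ ContinuousWithinAt x (Icc a b) t) :
    ∃ L : ℝ, Tendsto x (nhdsWithin t (Iio t)) (nhds L) ∧ 0 < |x t - L| := by
  obtain ⟨L, hL⟩ := hc.2 t ⟨hta, htb⟩
  refine ⟨L, hL, ?_⟩
  rcases eq_or_ne (x t) L with h | h
  · exact absurd (cwa_of_left hc hta htb (h ▸ hL)) hd
  · exact abs_pos.mpr (sub_ne_zero.mpr h)

lemma mem_Aset {a b ε t L : ℝ} {x : ℝ → ℝ} {n : ℕ} {k : ℤ}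
    (ht : t ∈ Ioo a b)
    (hR : Tendsto x (nhdsWithin t (Ioi t)) (nhds (x t)))
    (hL : Tendsto x (nhdsWithin t (Iio t)) (nhds L))
    (hε : ε < |x t - L|)
    (htk : (k:ℝ)/2^n ≤ t) (htk' : t < ((k:ℝ)+1)/2^n) :
    x ∈ Aset a b ε n k := by
  have h2n : (0:ℝ) < 2^n := by positivity
  set η : ℝ := (|x t - L| - ε)/2 with hη_def
  have hη : 0 < η := by simp only [hη_def]; linarith
  have hk1t : ((k:ℝ)-1)/2^n < t :=
    lt_of_lt_of_le (by apply (div_lt_div_iff_of_pos_right h2n).mpr; linarith) htk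
  -- left witness
  have hSL : ∀ᶠ s in nhdsWithin t (Iio t), dist (x s) L < η :=
    Metric.tendsto_nhds.mp hL η hη
  obtain ⟨l, hl, hlsub⟩ := mem_nhdsLT_iff_exists_Ioo_subset.mp hSL
  have hlo : max (max a (((k:ℝ)-1)/2^n)) l < t := by
    refine max_lt (max_lt ht.1 hk1t) hl
  obtain ⟨q, hq1, hq2⟩ := exists_rat_btwn hlo
  have hqd : dist (x q) L < η := hlsub ⟨lt_of_le_of_lt (le_max_right _ _) hq1, hq2⟩
  -- right witness
  have hSR : ∀ᶠ s in nhdsWithin t (Ioi t), dist (x s) (x t) < η :=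
    Metric.tendsto_nhds.mp hR η hη
  obtain ⟨u, hu, husub⟩ := mem_nhdsGT_iff_exists_Ioo_subset.mp hSR
  have hhi : t < min (min b (((k:ℝ)+1)/2^n)) u := lt_min (lt_min ht.2 htk') hu
  obtain ⟨q', hq'1, hq'2⟩ := exists_rat_btwn hhi
  have hq'd : dist (x q') (x t) < η :=
    husub ⟨hq'1, lt_of_lt_of_le hq'2 (min_le_right _ _)⟩
  -- memberships
  have hqmem : (q:ℝ) ∈ Icc a b ∩ grid n k := by
    constructor
    · exact ⟨le_of_lt (lt_of_le_of_lt ((le_max_left a _).trans (le_max_left _ l)) hq1),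
        le_of_lt (hq2.trans ht.2)⟩
    · exact ⟨le_of_lt (lt_of_le_of_lt ((le_max_right a _).trans (le_max_left _ l)) hq1),
        le_of_lt (hq2.trans htk')⟩
  have hq'mem : ((q':ℚ):ℝ) ∈ Icc a b ∩ grid n k := by
    constructor
    · exact ⟨le_of_lt (ht.1.trans hq'1),
        le_of_lt (lt_of_lt_of_le hq'2 ((min_le_left _ u).trans (min_le_left b _)))⟩
    · exact ⟨le_of_lt (hk1t.trans hq'1),
        le_of_lt (lt_of_lt_of_le hq'2 ((min_le_left _ u).trans (min_le_right b _)))⟩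
  refine ⟨q, q', hqmem, hq'mem, ?_⟩
  rw [Real.dist_eq] at hqd hq'd
  have htri : |x t - L| ≤ |x ↑q' - x t| + |x ↑q - x ↑q'| + |x ↑q - L| := by
    have h1 : x t - L = -(x ↑q' - x t) + (x ↑q' - x ↑q) + (x ↑q - L) := by ring
    calc |x t - L| = |(-(x ↑q' - x t)) + (x ↑q' - x ↑q) + (x ↑q - L)| := by rw [← h1]
      _ ≤ |(-(x ↑q' - x t)) + (x ↑q' - x ↑q)| + |x ↑q - L| := abs_add_le _ _
      _ ≤ |(-(x ↑q' - x t))| + |x ↑q' - x ↑q| + |x ↑q - L| := by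
          exact add_le_add (abs_add_le _ _) le_rfl
      _ = |x ↑q' - x t| + |x ↑q - x ↑q'| + |x ↑q - L| := by
          rw [abs_neg, abs_sub_comm (x ↑q') (x ↑q)]
  have : ε ≤ |x ↑q - x ↑q'| := by simp only [hη_def] at hqd hq'd; linarith
  exact this

lemma mem_Cset {a b t : ℝ} {x y : ℝ → ℝ}
    (hcx : CadlagOn a b x) (hcy : CadlagOn a b y) (ht : t ∈ Ioo a b)
    (hdx : ¬ ContinuousWithinAt x (Icc a b) t)
    (hdy : ¬ ContinuousWithinAt y (Icc a b) t) :
    ∃ m : ℕ, (x, y) ∈ Cset a b (1/(m+1)) := by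
  obtain ⟨Lx, hLx, hjx⟩ := jump_exists hcx ht.1 ht.2.le hdx
  obtain ⟨Ly, hLy, hjy⟩ := jump_exists hcy ht.1 ht.2.le hdy
  obtain ⟨m, hm⟩ := exists_nat_one_div_lt (lt_min hjx hjy)
  refine ⟨m, ?_⟩
  rw [Cset, mem_iInter]
  intro n
  rw [mem_iUnion]
  have h2n : (0:ℝ) < 2^n := by positivity
  refine ⟨⌊t * 2^n⌋, ?_, ?_⟩
  · refine mem_Aset ht (hcx.1 t ⟨ht.1.le, ht.2⟩) hLx
      (lt_of_lt_of_le hm (le_trans (min_le_left _ _) le_rfl)) ?_ ?_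
    · rw [div_le_iff₀ h2n]; exact Int.floor_le (t * 2^n)
    · rw [lt_div_iff₀ h2n]; push_cast; exact Int.lt_floor_add_one (t * 2^n)
  · refine mem_Aset ht (hcy.1 t ⟨ht.1.le, ht.2⟩) hLy
      (lt_of_lt_of_le hm (min_le_right _ _)) ?_ ?_
    · rw [div_le_iff₀ h2n]; exact Int.floor_le (t * 2^n)
    · rw [lt_div_iff₀ h2n]; push_cast; exact Int.lt_floor_add_one (t * 2^n)
def Tset (a b ε : ℝ) (x : ℝ → ℝ) : Set ℝ :=
  {t | t ∈ Icc a b ∧ ∀ r : ℝ, 0 < r → ∃ u v : ℝ, u ∈ Icc a b ∧ v ∈ Icc a b ∧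
    |u - t| < r ∧ |v - t| < r ∧ ε ≤ |x u - x v|}

lemma Tset_finite {a b ε : ℝ} {x : ℝ → ℝ} (hc : CadlagOn a b x) (hε : 0 < ε) :
    (Tset a b ε x).Finite := by
  have key : ∀ t : ℝ, ∃ δ : ℝ, 0 < δ ∧
      (∀ u v : ℝ, u ∈ Icc a b → v ∈ Icc a b → u ∈ Ioo (t - δ) t → v ∈ Ioo (t - δ) t →
        |x u - x v| < ε) ∧
      (∀ u v : ℝ, u ∈ Icc a b → v ∈ Icc a b → u ∈ Ico t (t + δ) → v ∈ Ico t (t + δ) →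
        |x u - x v| < ε) := by
    intro t
    rcases lt_or_ge t a with hta | hta
    · refine ⟨a - t, by linarith, ?_, ?_⟩
      · intro u v hu _ hu2 _; exfalso; have := hu.1; have := hu2.2; linarith
      · intro u v hu _ hu2 _; exfalso; have := hu.1; have := hu2.2; linarith
    rcases lt_or_ge b t with htb | htb
    · refine ⟨t - b, by linarith, ?_, ?_⟩
      · intro u v hu _ hu2 _; exfalso; have := hu.2; have := hu2.1; linarith
      · intro u v hu _ hu2 _; exfalso; have := hu.2; have := hu2.1; linarith
    -- t ∈ [a, b]
    have hleft : ∃ δ₁ : ℝ, 0 < δ₁ ∧ ∀ u v : ℝ, u ∈ Icc a b → v ∈ Icc a b →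
        u ∈ Ioo (t - δ₁) t → v ∈ Ioo (t - δ₁) t → |x u - x v| < ε := by
      rcases eq_or_lt_of_le hta with rfl | hta'
      · exact ⟨1, one_pos, fun u v hu _ hu2 _ => by
          exfalso; have := hu.1; have := hu2.2; linarith⟩
      · obtain ⟨L, hL⟩ := hc.2 t ⟨hta', htb⟩
        have hS : ∀ᶠ s in nhdsWithin t (Iio t), dist (x s) L < ε/3 :=
          Metric.tendsto_nhds.mp hL _ (by linarith)
        obtain ⟨l, hl, hsub⟩ := mem_nhdsLT_iff_exists_Ioo_subset.mp hS
        have hlt : l < t := hl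
        refine ⟨t - l, by linarith, fun u v _ _ hu hv => ?_⟩
        have hu' : dist (x u) L < ε/3 := hsub ⟨by linarith [hu.1], hu.2⟩
        have hv' : dist (x v) L < ε/3 := hsub ⟨by linarith [hv.1], hv.2⟩
        rw [Real.dist_eq] at hu' hv'
        have h3 : |x u - x v| ≤ |x u - L| + |x v - L| := by
          calc |x u - x v| = |(x u - L) - (x v - L)| := by ring_nf
            _ ≤ |x u - L| + |x v - L| := abs_sub _ _
        linarith
    have hright : ∃ δ₂ : ℝ, 0 < δ₂ ∧ ∀ u v : ℝ, u ∈ Icc a b → v ∈ Icc a b →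
        u ∈ Ico t (t + δ₂) → v ∈ Ico t (t + δ₂) → |x u - x v| < ε := by
      rcases eq_or_lt_of_le htb with rfl | htb'
      · refine ⟨1, one_pos, fun u v hu hv hu2 hv2 => ?_⟩
        have hub : u = t := le_antisymm hu.2 hu2.1
        have hvb : v = t := le_antisymm hv.2 hv2.1
        rw [hub, hvb]; simpa using hε
      · have hS : ∀ᶠ s in nhdsWithin t (Ioi t), dist (x s) (x t) < ε/3 :=
          Metric.tendsto_nhds.mp (hc.1 t ⟨hta, htb'⟩) _ (by linarith)
        obtain ⟨w, hw, hsub⟩ := mem_nhdsGT_iff_exists_Ioo_subset.mp hS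
        have hwt : t < w := hw
        refine ⟨w - t, by linarith, fun u v _ _ hu hv => ?_⟩
        have hud : |x u - x t| < ε/3 := by
          rcases eq_or_lt_of_le hu.1 with rfl | hu1
          · simp only [sub_self, abs_zero]; linarith
          · have h := hsub ⟨hu1, by linarith [hu.2]⟩
            simpa [Real.dist_eq] using h
        have hvd : |x v - x t| < ε/3 := by
          rcases eq_or_lt_of_le hv.1 with rfl | hv1
          · simp only [sub_self, abs_zero]; linarith
          · have h := hsub ⟨hv1, by linarith [hv.2]⟩
            simpa [Real.dist_eq] using h
        have h3 : |x u - x v| ≤ |x u - x t| + |x v - x t| := by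
          calc |x u - x v| = |(x u - x t) - (x v - x t)| := by ring_nf
            _ ≤ |x u - x t| + |x v - x t| := abs_sub _ _
        linarith
    obtain ⟨δ₁, hδ₁, H1⟩ := hleft
    obtain ⟨δ₂, hδ₂, H2⟩ := hright
    refine ⟨min δ₁ δ₂, lt_min hδ₁ hδ₂, ?_, ?_⟩
    · intro u v hu hv hu2 hv2
      exact H1 u v hu hv ⟨by have := hu2.1; have := min_le_left δ₁ δ₂; linarith, hu2.2⟩
        ⟨by have := hv2.1; have := min_le_left δ₁ δ₂; linarith, hv2.2⟩
    · intro u v hu hv hu2 hv2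
      exact H2 u v hu hv ⟨hu2.1, by have := hu2.2; have := min_le_right δ₁ δ₂; linarith⟩
        ⟨hv2.1, by have := hv2.2; have := min_le_right δ₁ δ₂; linarith⟩
  choose δ hδpos hHl hHr using key
  -- local uniqueness
  have uniq : ∀ t : ℝ, ∀ s ∈ Tset a b ε x, s ∈ Ioo (t - δ t) (t + δ t) → s = t := by
    intro t s hs hsI
    by_contra hne
    rcases lt_or_gt_of_ne hne with hlt | hgt
    · -- s < t
      have hr : 0 < min (s - (t - δ t)) (t - s) := by
        refine lt_min (by linarith [hsI.1]) (by linarith)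
      obtain ⟨u, v, hu, hv, hur, hvr, huv⟩ := hs.2 _ hr
      have hu2 : u ∈ Ioo (t - δ t) t := by
        rw [abs_lt] at hur
        constructor
        · have := min_le_left (s - (t - δ t)) (t - s); linarith [hur.1]
        · have := min_le_right (s - (t - δ t)) (t - s); linarith [hur.2]
      have hv2 : v ∈ Ioo (t - δ t) t := by
        rw [abs_lt] at hvr
        constructor
        · have := min_le_left (s - (t - δ t)) (t - s); linarith [hvr.1]
        · have := min_le_right (s - (t - δ t)) (t - s); linarith [hvr.2]
      exact absurd huv (not_le.mpr (hHl t u v hu hv hu2 hv2))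
    · -- t < s
      have hr : 0 < min (s - t) (t + δ t - s) := by
        refine lt_min (by linarith) (by linarith [hsI.2])
      obtain ⟨u, v, hu, hv, hur, hvr, huv⟩ := hs.2 _ hr
      have hu2 : u ∈ Ico t (t + δ t) := by
        rw [abs_lt] at hur
        constructor
        · have := min_le_left (s - t) (t + δ t - s); linarith [hur.1]
        · have := min_le_right (s - t) (t + δ t - s); linarith [hur.2]
      have hv2 : v ∈ Ico t (t + δ t) := by
        rw [abs_lt] at hvr
        constructor
        · have := min_le_left (s - t) (t + δ t - s); linarith [hvr.1]
        · have := min_le_right (s - t) (t + δ t - s); linarith [hvr.2]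
      exact absurd huv (not_le.mpr (hHr t u v hu hv hu2 hv2))
  obtain ⟨F, hFmem, hFcov⟩ := isCompact_Icc.elim_nhds_subcover
    (fun t => Ioo (t - δ t) (t + δ t))
    (fun t _ => Ioo_mem_nhds (by linarith [hδpos t]) (by linarith [hδpos t]))
  refine Set.Finite.subset F.finite_toSet ?_
  intro s hs
  have hscov := hFcov hs.1
  rw [mem_iUnion₂] at hscov
  obtain ⟨t, htF, hst⟩ := hscov
  have := uniq t s hs hst
  rw [this]; exact htF
lemma section_subset {a b ε : ℝ} (hε : 0 < ε) {x y : ℝ → ℝ}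
    (hy : (x, y) ∈ Cset a b ε) :
    ∃ t ∈ Tset a b ε x, ¬ ContinuousWithinAt y (Icc a b) t := by
  choose k hk using fun n => mem_iUnion.mp (mem_iInter.mp hy n)
  have hxw : ∀ n, x ∈ Aset a b ε n (k n) := fun n => (hk n).1
  have hyw : ∀ n, y ∈ Aset a b ε n (k n) := fun n => (hk n).2
  set c : ℕ → ℝ := fun n => (k n : ℝ)/2^n with hc_def
  have h2n : ∀ n : ℕ, (0:ℝ) < 2^n := fun n => by positivity
  have h2n1 : ∀ n : ℕ, (1:ℝ)/2^n ≤ 1 := fun n => by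
    rw [div_le_one (h2n n)]; exact one_le_pow₀ (by norm_num)
  have hgrid_near : ∀ n : ℕ, ∀ q : ℝ, q ∈ grid n (k n) → |q - c n| ≤ 1/2^n := by
    intro n q hq
    rw [abs_le]
    have h1 : ((k n : ℝ) - 1)/2^n = c n - 1/2^n := by rw [hc_def]; ring
    have h2 : ((k n : ℝ) + 1)/2^n = c n + 1/2^n := by rw [hc_def]; ring
    constructor
    · have := hq.1; rw [h1] at this; linarith
    · have := hq.2; rw [h2] at this; linarith
  have hcmem : ∀ n, c n ∈ Icc (a - 1) (b + 1) := by
    intro n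
    obtain ⟨q, _, hq, _, _⟩ := hxw n
    have h1 := hgrid_near n q hq.2
    rw [abs_le] at h1
    have ha : a ≤ (q:ℝ) := hq.1.1
    have hb : (q:ℝ) ≤ b := hq.1.2
    have := h2n1 n
    constructor <;> [linarith [h1.2]; linarith [h1.1]]
  obtain ⟨t, _, φ, hφ, hconv⟩ := (isCompact_Icc (a := a - 1) (b := b + 1)).tendsto_subseq hcmem
  have h2pow : Tendsto (fun j : ℕ => (1:ℝ)/2^j) atTop (nhds 0) := by
    simpa [one_div_pow] using
      tendsto_pow_atTop_nhds_zero_of_lt_one (by norm_num : (0:ℝ) ≤ 1/2) (by norm_num)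
  have h2powφ : Tendsto (fun j : ℕ => (1:ℝ)/2^(φ j)) atTop (nhds 0) :=
    h2pow.comp hφ.tendsto_atTop
  have key : ∀ r : ℝ, 0 < r → ∃ n : ℕ, |c n - t| < r/2 ∧ (1:ℝ)/2^n < r/2 := by
    intro r hr
    have e1 : ∀ᶠ j in atTop, dist ((c ∘ φ) j) t < r/2 :=
      Metric.tendsto_nhds.mp hconv (r/2) (by linarith)
    have e2 : ∀ᶠ j in atTop, (1:ℝ)/2^(φ j) < r/2 :=
      h2powφ.eventually (gt_mem_nhds (by linarith))
    obtain ⟨j, hj1, hj2⟩ := (e1.and e2).exists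
    exact ⟨φ j, by simpa [Real.dist_eq] using hj1, hj2⟩
  have hnear : ∀ r : ℝ, 0 < r → ∃ n : ℕ, ∀ q : ℝ, q ∈ grid n (k n) → |q - t| < r := by
    intro r hr
    obtain ⟨n, hn1, hn2⟩ := key r hr
    refine ⟨n, fun q hq => ?_⟩
    have h1 := hgrid_near n q hq
    calc |q - t| ≤ |q - c n| + |c n - t| := by
          have : q - t = (q - c n) + (c n - t) := by ring
          rw [this]; exact abs_add_le _ _
      _ < r := by linarith
  have htmem : t ∈ Icc a b := by
    constructor
    · by_contra h
      push_neg at h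
      obtain ⟨n, hn⟩ := hnear (a - t) (by linarith)
      obtain ⟨q, _, hq, _, _⟩ := hxw n
      have := hn q hq.2
      have ha : a ≤ (q:ℝ) := hq.1.1
      rw [abs_lt] at this
      linarith [this.2]
    · by_contra h
      push_neg at h
      obtain ⟨n, hn⟩ := hnear (t - b) (by linarith)
      obtain ⟨q, _, hq, _, _⟩ := hxw n
      have := hn q hq.2
      have hb : (q:ℝ) ≤ b := hq.1.2
      rw [abs_lt] at this
      linarith [this.1]
  refine ⟨t, ⟨htmem, ?_⟩, ?_⟩
  · intro r hr
    obtain ⟨n, hn⟩ := hnear r hr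
    obtain ⟨q, q', hq, hq', hxε⟩ := hxw n
    exact ⟨q, q', hq.1, hq'.1, hn q hq.2, hn q' hq'.2, hxε⟩
  · intro hcont
    have hev : ∀ᶠ s in nhdsWithin t (Icc a b), dist (y s) (y t) < ε/2 :=
      Metric.tendsto_nhds.mp hcont (ε/2) (by linarith)
    obtain ⟨ρ, hρ, hball⟩ := Metric.mem_nhdsWithin_iff.mp hev
    obtain ⟨n, hn⟩ := hnear ρ hρ
    obtain ⟨q, q', hq, hq', hyε⟩ := hyw n
    have hqd : dist (y q) (y t) < ε/2 := hball ⟨by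
      rw [Metric.mem_ball, Real.dist_eq]; exact hn q hq.2, hq.1⟩
    have hq'd : dist (y q') (y t) < ε/2 := hball ⟨by
      rw [Metric.mem_ball, Real.dist_eq]; exact hn q' hq'.2, hq'.1⟩
    rw [Real.dist_eq] at hqd hq'd
    have h3 : |y q - y q'| ≤ |y q - y t| + |y q' - y t| := by
      calc |y ↑q - y ↑q'| = |(y ↑q - y t) - (y ↑q' - y t)| := by ring_nf
        _ ≤ |y ↑q - y t| + |y ↑q' - y t| := abs_sub _ _
    linarith

end
end Stmt10Aux

/-- If `W, W'` are independent random elements of `D([a,b])` with common distribution `ν`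
having no fixed jumps, then almost surely `W` and `W'` have no common discontinuity point. -/
theorem stmt10 (a b : ℝ) (hab : a < b) {Ω : Type*} [MeasurableSpace Ω] (μ : Measure Ω)
    [IsProbabilityMeasure μ]
    (W W' : Ω → ℝ → ℝ) (hmW : Measurable W) (hmW' : Measurable W')
    (hindep : IndepFun W W' μ)
    (ν : Measure (ℝ → ℝ))
    (hν : Measure.map W μ = ν) (hν' : Measure.map W' μ = ν)
    (hcad : ∀ᵐ ω ∂μ, CadlagOn a b (W ω) ∧ CadlagOn a b (W' ω))
    (hnofix : ∀ t ∈ Set.Icc a b, ν {x | ¬ ContinuousWithinAt x (Set.Icc a b) t} = 0) :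
    μ {ω | (DiscOn a b (W ω) ∩ DiscOn a b (W' ω)).Nonempty} = 0 := by
    classical
  open Stmt10Aux in
  haveI hPν : IsProbabilityMeasure ν := hν ▸ Measure.isProbabilityMeasure_map hmW.aemeasurable
  have hpair : Measure.map (fun ω => (W ω, W' ω)) μ = ν.prod ν := by
    have h := (ProbabilityTheory.indepFun_iff_map_prod_eq_prod_map_map
      hmW.aemeasurable hmW'.aemeasurable).mp hindep
    rw [hν, hν'] at h; exact h
  set Sb : Set (ℝ → ℝ) := toMeasurable ν {y | ¬ ContinuousWithinAt y (Set.Icc a b) b}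
    with hSb_def
  have hSbm : MeasurableSet Sb := measurableSet_toMeasurable _ _
  have hSb0 : ν Sb = 0 := by
    rw [hSb_def, measure_toMeasurable]; exact hnofix b ⟨hab.le, le_rfl⟩
  have hWSb : μ (W ⁻¹' Sb) = 0 := by
    rw [← Measure.map_apply hmW hSbm, hν]; exact hSb0
  have hcad0 : μ {ω | ¬ (CadlagOn a b (W ω) ∧ CadlagOn a b (W' ω))} = 0 := ae_iff.mp hcad
  have hsec : ∀ m : ℕ, ∀ x : ℝ → ℝ, CadlagOn a b x →
      ν {y | (x, y) ∈ Stmt10Aux.Cset a b (1/(m+1))} = 0 := by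
    intro m x hcx
    have hεpos : (0:ℝ) < 1/(m+1) := by positivity
    have hsub : {y | (x, y) ∈ Stmt10Aux.Cset a b (1/(m+1))} ⊆
        ⋃ t ∈ Stmt10Aux.Tset a b (1/(m+1)) x,
          {y | ¬ ContinuousWithinAt y (Set.Icc a b) t} := by
      intro y hy
      obtain ⟨t, ht, hty⟩ := Stmt10Aux.section_subset hεpos hy
      exact mem_biUnion ht hty
    refine measure_mono_null hsub ?_
    rw [measure_biUnion_null_iff (Stmt10Aux.Tset_finite hcx hεpos).countable]
    intro t ht
    exact hnofix t ht.1
  have hCm : ∀ m : ℕ, μ ((fun ω => (W ω, W' ω)) ⁻¹' Stmt10Aux.Cset a b (1/(m+1))) = 0 := by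
    intro m
    have hCmeas := Stmt10Aux.measurableSet_Cset a b (1/((m:ℝ)+1))
    rw [← Measure.map_apply (hmW.prodMk hmW') hCmeas, hpair, Measure.prod_apply hCmeas,
      lintegral_eq_zero_iff (measurable_measure_prodMk_left hCmeas)]
    have hmG : MeasurableSet {x : ℝ → ℝ |
        ν (Prod.mk x ⁻¹' Stmt10Aux.Cset a b (1/(m+1))) = 0} :=
      (measurable_measure_prodMk_left hCmeas) (measurableSet_singleton 0)
    have hG : ν {x : ℝ → ℝ | ¬ ν (Prod.mk x ⁻¹' Stmt10Aux.Cset a b (1/(m+1))) = 0} = 0 := by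
      have hGm : MeasurableSet {x : ℝ → ℝ |
          ¬ ν (Prod.mk x ⁻¹' Stmt10Aux.Cset a b (1/(m+1))) = 0} := hmG.compl
      nth_rewrite 1 [← hν]
      rw [Measure.map_apply hmW hGm]
      refine measure_mono_null ?_ hcad0
      intro ω hω
      intro hcc
      exact hω (hsec m (W ω) hcc.1)
    have hae : ∀ᵐ x ∂ν, ν (Prod.mk x ⁻¹' Stmt10Aux.Cset a b (1/(m+1))) = 0 := by
      rw [ae_iff]; exact hG
    filter_upwards [hae] with x hx
    simpa using hx
  have hcover : {ω | (DiscOn a b (W ω) ∩ DiscOn a b (W' ω)).Nonempty} ⊆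
      ({ω | ¬ (CadlagOn a b (W ω) ∧ CadlagOn a b (W' ω))} ∪ (W ⁻¹' Sb)) ∪
      ⋃ m : ℕ, (fun ω => (W ω, W' ω)) ⁻¹' Stmt10Aux.Cset a b (1/(m+1)) := by
    rintro ω ⟨t, ht1, ht2⟩
    by_cases hcω : CadlagOn a b (W ω) ∧ CadlagOn a b (W' ω)
    · have htI : t ∈ Set.Icc a b := ht1.1
      have hta : a < t := by
        rcases eq_or_lt_of_le htI.1 with rfl | h
        · exact absurd (Stmt10Aux.cwa_at_a hab hcω.1) ht1.2
        · exact h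
      rcases eq_or_lt_of_le htI.2 with rfl | htb
      · exact Or.inl (Or.inr (subset_toMeasurable ν _ ht1.2))
      · obtain ⟨m, hm⟩ := Stmt10Aux.mem_Cset hcω.1 hcω.2 ⟨hta, htb⟩ ht1.2 ht2.2
        exact Or.inr (mem_iUnion.mpr ⟨m, hm⟩)
    · exact Or.inl (Or.inl hcω)
  refine measure_mono_null hcover ?_
  exact measure_union_null (measure_union_null hcad0 hWSb) (measure_iUnion_null hCm)
end

section
/- For any compact interval I, any δ > 0, and any x ∈ D(I), there exist finitely many points t_1 < t_2 < ⋯ < t_m in I (depending only on I and δ, e.g. a δ-net of I) such that ‖x‖_∞ ≤ w''(x, δ) + max_{1≤k≤m} |x(t_k)| for all x ∈ D(I). -/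
open MeasureTheory ProbabilityTheory Filter Set

/-- The ordinary modulus of continuity `w(x, δ)` of `x` on `[a,b]`. -/
noncomputable def oscMod (a b δ : ℝ) (x : ℝ → ℝ) : ℝ :=
  sSup {v : ℝ | ∃ s t : ℝ, s ∈ Set.Icc a b ∧ t ∈ Set.Icc a b ∧ |t - s| ≤ δ ∧ v = |x t - x s|}

/-- The càdlàg modulus `w''(x, δ) = sup { |x t - x s| ⊓ |x u - x t| : s ≤ t ≤ u, u - s ≤ δ }`
on `[a,b]`. -/
noncomputable def cadlagMod (a b δ : ℝ) (x : ℝ → ℝ) : ℝ :=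
  sSup {v : ℝ | ∃ s t u : ℝ, s ∈ Set.Icc a b ∧ t ∈ Set.Icc a b ∧ u ∈ Set.Icc a b ∧
    s ≤ t ∧ t ≤ u ∧ u - s ≤ δ ∧ v = min |x t - x s| |x u - x t|}

/-- For each `δ > 0` there are finitely many points `t_1 < ⋯ < t_m` in `[a,b]` such that every
càdlàg `x` satisfies `‖x‖_∞ ≤ w''(x,δ) + max_k |x (t_k)|`. -/
theorem stmt12 (a b : ℝ) (hab : a < b) (δ : ℝ) (hδ : 0 < δ) :
    ∃ (m : ℕ) (ts : Fin m → ℝ), 0 < m ∧ StrictMono ts ∧ (∀ k, ts k ∈ Set.Icc a b) ∧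
      ∀ x : ℝ → ℝ, CadlagOn a b x →
        sSup ((fun t => |x t|) '' Set.Icc a b) ≤ cadlagMod a b δ x + ⨆ k, |x (ts k)| := by
  have hab' : (0:ℝ) < b - a := sub_pos.mpr hab
  set n : ℕ := ⌈(b - a) / δ⌉₊ with hn_def
  have hn : 0 < n := Nat.ceil_pos.mpr (div_pos hab' hδ)
  have hn' : (0:ℝ) < n := by exact_mod_cast hn
  set h : ℝ := (b - a) / n with hh_def
  have hh : 0 < h := div_pos hab' hn'
  have hnh : (n : ℝ) * h = b - a := mul_div_cancel₀ _ hn'.ne'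
  have hhδ : h ≤ δ := by
    rw [hh_def, div_le_iff₀ hn']
    calc b - a = ((b - a) / δ) * δ := by field_simp
      _ ≤ n * δ := mul_le_mul_of_nonneg_right (Nat.le_ceil _) hδ.le
      _ = δ * n := mul_comm _ _
  refine ⟨n + 1, fun k => a + (k : ℝ) * h, Nat.succ_pos n, ?_, ?_, ?_⟩
  · intro k l hkl
    have hkl' : (k : ℝ) < (l : ℝ) := by exact_mod_cast hkl
    simp only []
    nlinarith
  · intro k
    have hk0 : (0:ℝ) ≤ (k : ℝ) := by positivity
    have hk : (k : ℝ) ≤ n := by exact_mod_cast Nat.lt_succ_iff.mp k.2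
    constructor
    · show a ≤ a + (k:ℝ) * h
      nlinarith
    · show a + (k:ℝ) * h ≤ b
      nlinarith
  · intro x _
    set S : Set ℝ := {v : ℝ | ∃ s t u : ℝ, s ∈ Set.Icc a b ∧ t ∈ Set.Icc a b ∧ u ∈ Set.Icc a b ∧
      s ≤ t ∧ t ≤ u ∧ u - s ≤ δ ∧ v = min |x t - x s| |x u - x t|} with hS
    have hcm : cadlagMod a b δ x = sSup S := rfl
    have h0S : (0:ℝ) ∈ S := by
      refine ⟨a, a, a, ?_, ?_, ?_, le_refl a, le_refl a, by linarith, by simp⟩ <;>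
        exact ⟨le_refl a, hab.le⟩
    have hbdd : BddAbove (Set.range fun k : Fin (n+1) => |x (a + (k:ℝ) * h)|) :=
      Set.Finite.bddAbove (Set.finite_range _)
    have hsup0 : 0 ≤ ⨆ k : Fin (n+1), |x (a + (k:ℝ) * h)| :=
      le_trans (abs_nonneg _) (le_ciSup hbdd (0 : Fin (n+1)))
    have key : ∀ t ∈ Set.Icc a b, ∃ v ∈ S, |x t| ≤ v + ⨆ k : Fin (n+1), |x (a + (k:ℝ) * h)| := by
      intro t ht
      set j : ℕ := min ⌊(t - a) / h⌋₊ (n - 1) with hj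
      have hjn : j < n := lt_of_le_of_lt (min_le_right _ _) (Nat.sub_lt hn one_pos)
      have hfl : (0:ℝ) ≤ (t - a) / h := div_nonneg (by linarith [ht.1]) hh.le
      have hs_le : a + (j:ℝ) * h ≤ t := by
        have h1 : (j : ℝ) ≤ (t - a) / h :=
          le_trans (by exact_mod_cast min_le_left _ _ : (j:ℝ) ≤ (⌊(t - a) / h⌋₊ : ℝ))
            (Nat.floor_le hfl)
        have := (le_div_iff₀ hh).mp h1
        linarith
      have hu_ge : t ≤ a + ((j:ℝ) + 1) * h := by
        by_cases hc : ⌊(t - a) / h⌋₊ ≤ n - 1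
        · have hje : j = ⌊(t - a) / h⌋₊ := min_eq_left hc
          have h2 : (t - a) / h < (j:ℝ) + 1 := by
            rw [hje]; exact Nat.lt_floor_add_one _
          have := (div_lt_iff₀ hh).mp h2
          linarith
        · have hje : j = n - 1 := min_eq_right (le_of_not_ge hc)
          have hj1 : j + 1 = n := by omega
          have : ((j:ℝ) + 1) = (n : ℝ) := by exact_mod_cast congrArg (Nat.cast (R := ℝ)) hj1
          rw [this]
          linarith [ht.2, hnh]
      have hjle : (j:ℝ) ≤ (n:ℝ) := by exact_mod_cast hjn.le
      have hj1le : (j:ℝ) + 1 ≤ (n:ℝ) := by exact_mod_cast hjn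
      have hj0 : (0:ℝ) ≤ (j:ℝ) := by positivity
      have hsI : a + (j:ℝ) * h ∈ Set.Icc a b := ⟨by nlinarith, by nlinarith⟩
      have huI : a + ((j:ℝ) + 1) * h ∈ Set.Icc a b := ⟨by nlinarith, by nlinarith⟩
      refine ⟨min |x t - x (a + (j:ℝ) * h)| |x (a + ((j:ℝ) + 1) * h) - x t|, ?_, ?_⟩
      · exact ⟨a + (j:ℝ) * h, t, a + ((j:ℝ) + 1) * h, hsI, ht, huI, hs_le, hu_ge,
          by linarith, rfl⟩
      · have hks : |x (a + (j:ℝ) * h)| ≤ ⨆ k : Fin (n+1), |x (a + (k:ℝ) * h)| := by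
          simpa using le_ciSup hbdd (⟨j, by omega⟩ : Fin (n+1))
        have hku : |x (a + ((j:ℝ) + 1) * h)| ≤ ⨆ k : Fin (n+1), |x (a + (k:ℝ) * h)| := by
          have := le_ciSup hbdd (⟨j + 1, by omega⟩ : Fin (n+1))
          simpa using this
        rcases le_total |x t - x (a + (j:ℝ) * h)| |x (a + ((j:ℝ) + 1) * h) - x t| with hmin | hmin
        · rw [min_eq_left hmin]
          have := abs_sub_abs_le_abs_sub (x t) (x (a + (j:ℝ) * h))
          linarith
        · rw [min_eq_right hmin]
          have := abs_sub_abs_le_abs_sub (x t) (x (a + ((j:ℝ) + 1) * h))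
          rw [abs_sub_comm] at this
          linarith
    rw [hcm]
    by_cases hBS : BddAbove S
    · have hS0 : 0 ≤ sSup S := le_csSup hBS h0S
      refine Real.sSup_le ?_ (by linarith)
      rintro v ⟨t, ht, rfl⟩
      obtain ⟨w, hwS, hw⟩ := key t ht
      have : w ≤ sSup S := le_csSup hBS hwS
      linarith
    · have himB : ¬ BddAbove ((fun t => |x t|) '' Set.Icc a b) := by
        intro hB
        obtain ⟨M, hM⟩ := hB
        apply hBS
        refine ⟨2 * M, ?_⟩
        rintro v ⟨s, t, u, hsI, htI, huI, _, _, _, rfl⟩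
        have h1 : |x t| ≤ M := hM ⟨t, htI, rfl⟩
        have h2 : |x s| ≤ M := hM ⟨s, hsI, rfl⟩
        have h3 : min |x t - x s| |x u - x t| ≤ |x t - x s| := min_le_left _ _
        have h4 : |x t - x s| ≤ |x t| + |x s| := abs_sub _ _
        linarith
      rw [Real.sSup_of_not_bddAbove himB]
      have : ¬ BddAbove S := hBS
      have hSS : sSup S = 0 := Real.sSup_of_not_bddAbove hBS
      rw [hSS]
      linarith
end
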